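/- arXiv:1512.01348 — 3 statements merged into one kernel-verified Lean document; each statement's English description precedes it below -/
import Mathlib

section
/- Let G be a finite simple graph with vertex set V and let S ⊆ V be nonempty with c(S) = {v ∈ V ∖ S : N(v) ⊆ S}. If the bipartite subgraph of G induced between c(S) and S has a matching saturating S, then H(G) = |S| + H(G − d(S)), where d(S) = c(S) ∪ S and G − d(S) is the subgraph of G induced on V ∖ d(S). -/
noncomputable section

/-- `g : [q]^V → [q]` depends essentially on coordinate `u`: there exist two inputs that
differ only at coordinate `u` on which `g` takes different values. -/
def DependsOnCoord {V : Type*} {q : ℕ} (g : (V → Fin q) → Fin q) (u : V) : Prop :=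
  ∃ a b : V → Fin q, (∀ w, w ≠ u → a w = b w) ∧ g a ≠ g b

/-- The interaction graph of `f` is contained in the simple graph `G`
(viewed as the symmetric loopless digraph with arcs `(u,v)` and `(v,u)` for every edge `uv`). -/
def IGLe {V : Type*} {q : ℕ} (G : SimpleGraph V) (f : (V → Fin q) → (V → Fin q)) : Prop :=
  ∀ u v : V, DependsOnCoord (fun x => f x v) u → G.Adj u v

/-- The `q`-ary guessing number of a simple graph `G`: the maximum of `log_q |Fix(f)|`
over all `f` whose interaction graph is contained in `G`. -/
def guessing {V : Type*} (G : SimpleGraph V) (q : ℕ) : ℝ :=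
  sSup {x : ℝ | ∃ f : (V → Fin q) → (V → Fin q),
    IGLe G f ∧ x = Real.logb q (Set.ncard {p : V → Fin q | f p = p})}

/-- The entropy of a simple graph: the supremum over `q ≥ 2` of its `q`-guessing numbers. -/
def graphEntropy {V : Type*} (G : SimpleGraph V) : ℝ :=
  sSup {x : ℝ | ∃ q : ℕ, 2 ≤ q ∧ x = guessing G q}

/-- The set of all entropies of finite simple graphs. -/
def entropySet : Set ℝ := {x : ℝ | ∃ (n : ℕ) (G : SimpleGraph (Fin n)), graphEntropy G = x}

/-- A finite simple graph is entropy-minimal if no simple graph with fewer vertices has the same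
fractional part of the entropy. -/
def EntropyMinimal {n : ℕ} (G : SimpleGraph (Fin n)) : Prop :=
  ∀ m : ℕ, m < n → ∀ G' : SimpleGraph (Fin m),
    Int.fract (graphEntropy G') ≠ Int.fract (graphEntropy G)


/-- `c(S)`: the vertices outside `S` all of whose neighbours lie in `S`. -/
def cSet {V : Type*} (G : SimpleGraph V) (S : Set V) : Set V :=
  {v | v ∉ S ∧ ∀ w, G.Adj v w → w ∈ S}

/-- The bipartite subgraph of `G` induced between `C` and `S` has a matching saturating `S`:
each vertex of `S` is matched to a distinct neighbour in `C`. -/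
def HasSaturatingMatching {V : Type*} (G : SimpleGraph V) (C S : Set V) : Prop :=
  ∃ g : V → V, (∀ s ∈ S, g s ∈ C ∧ G.Adj (g s) s) ∧ Set.InjOn g S

lemma not_dependsOn_eq {V : Type*} {q : ℕ} {g : (V → Fin q) → Fin q} {u : V}
    (h : ¬ DependsOnCoord g u) {a b : V → Fin q} (hab : ∀ w, w ≠ u → a w = b w) : g a = g b := by
  by_contra hne; exact h ⟨a, b, hab, hne⟩

lemma eq_of_agreeOn {V : Type*} [Fintype V] {q : ℕ} {g : (V → Fin q) → Fin q} {T : Set V}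
    (h : ∀ u, DependsOnCoord g u → u ∈ T)
    (a b : V → Fin q) (hab : ∀ w ∈ T, a w = b w) : g a = g b := by
  classical
  suffices H : ∀ (k : ℕ) (a : V → Fin q),
      (Finset.univ.filter fun w => a w ≠ b w).card ≤ k →
      (∀ w ∈ T, a w = b w) → g a = g b from H _ a le_rfl hab
  intro k
  induction k with
  | zero =>
    intro a hcard haT
    have hab' : a = b := by
      funext w
      by_contra hw
      have hmem : w ∈ Finset.univ.filter fun w => a w ≠ b w := by simp [hw]
      have := Finset.card_pos.mpr ⟨w, hmem⟩
      omega
    rw [hab']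
  | succ k ih =>
    intro a hcard haT
    by_cases hab' : a = b
    · rw [hab']
    · obtain ⟨u, hu⟩ := Function.ne_iff.mp hab'
      have huT : u ∉ T := fun h' => hu (haT u h')
      have hnd : ¬ DependsOnCoord g u := fun hd => huT (h u hd)
      have h1 : g a = g (Function.update a u (b u)) :=
        not_dependsOn_eq hnd (fun w hw => (Function.update_of_ne hw _ _).symm)
      rw [h1]
      refine ih _ ?_ ?_
      · have hsub : (Finset.univ.filter fun w => Function.update a u (b u) w ≠ b w)
            ⊆ (Finset.univ.filter fun w => a w ≠ b w).erase u := by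
          intro w hw
          simp only [Finset.mem_filter, Finset.mem_univ, true_and] at hw
          rcases eq_or_ne w u with rfl | hwu
          · simp [Function.update_self] at hw
          · rw [Function.update_of_ne hwu] at hw
            exact Finset.mem_erase.mpr ⟨hwu, by simp [hw]⟩
        have hu' : u ∈ Finset.univ.filter fun w => a w ≠ b w := by simp [hu]
        have h2 := Finset.card_le_card hsub
        have h3 := Finset.card_erase_of_mem hu'
        have h4 := Finset.card_pos.mpr ⟨u, hu'⟩
        omega
      · intro w hw
        rcases eq_or_ne w u with rfl | hwu
        · simp [Function.update_self]
        · rw [Function.update_of_ne hwu]; exact haT w hw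

lemma lemA {n : ℕ} (G : SimpleGraph (Fin n)) (S C W : Set (Fin n))
    (hC : C = cSet G S) (hW : W = (C ∪ S)ᶜ)
    (g₀ : Fin n → Fin n) (hg₀ : ∀ s ∈ S, g₀ s ∈ C ∧ G.Adj (g₀ s) s)
    (hinj : Set.InjOn g₀ S) (q : ℕ) (hq : 0 < q)
    (f' : ((↥W) → Fin q) → (↥W) → Fin q)
    (hf' : IGLe (G.induce W) f') :
    ∃ f : (Fin n → Fin q) → Fin n → Fin q, IGLe G f ∧
      Set.ncard {p : Fin n → Fin q | f p = p}
        = q ^ S.ncard * Set.ncard {y : ↥W → Fin q | f' y = y} := by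
  classical
  have z : Fin q := ⟨0, hq⟩
  have hCS : ∀ {v : Fin n}, v ∈ C → v ∉ S := fun hv => (hC ▸ hv).1
  have hWmem : ∀ {v : Fin n}, v ∉ S → v ∉ C → v ∈ W := by
    intro v h1 h2
    rw [hW, Set.mem_compl_iff, Set.mem_union]
    rintro (h | h) <;> [exact h2 h; exact h1 h]
  have hWS : ∀ (w : ↥W), (↑w : Fin n) ∉ S ∧ (↑w : Fin n) ∉ C := by
    intro w
    have h2 : (↑w : Fin n) ∈ (C ∪ S)ᶜ := by rw [← hW]; exact w.2
    rw [Set.mem_compl_iff, Set.mem_union] at h2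
    exact ⟨fun h => h2 (Or.inr h), fun h => h2 (Or.inl h)⟩
  set f : (Fin n → Fin q) → Fin n → Fin q := fun x v =>
    if hv : v ∈ S then x (g₀ v)
    else if hm : ∃ s, s ∈ S ∧ g₀ s = v then x hm.choose
    else if hc : v ∈ C then z
    else f' (fun w => x ↑w) ⟨v, hWmem hv hc⟩ with hf
  have hfixS : ∀ x, f x = x → ∀ s ∈ S, x (g₀ s) = x s := by
    intro x hx s hs
    conv_rhs => rw [← hx]
    simp only [hf, dif_pos hs]
  refine ⟨f, ?_, ?_⟩
  · -- IGLe
    intro u v hdep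
    by_cases hv : v ∈ S
    · simp only [hf, dif_pos hv] at hdep
      obtain ⟨a, b, hab, hne⟩ := hdep
      have : u = g₀ v := by
        by_contra hne'
        exact hne (hab _ (fun h => hne' h.symm))
      exact this ▸ (hg₀ v hv).2
    · by_cases hm : ∃ s, s ∈ S ∧ g₀ s = v
      · simp only [hf, dif_neg hv, dif_pos hm] at hdep
        obtain ⟨a, b, hab, hne⟩ := hdep
        have : u = hm.choose := by
          by_contra hne'
          exact hne (hab _ (fun h => hne' h.symm))
        subst this
        have hs := hm.choose_spec
        have hadj := (hg₀ _ hs.1).2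
        rw [hs.2] at hadj
        exact hadj.symm
      · by_cases hc : v ∈ C
        · simp only [hf, dif_neg hv, dif_neg hm, dif_pos hc] at hdep
          obtain ⟨a, b, hab, hne⟩ := hdep
          exact absurd rfl hne
        · simp only [hf, dif_neg hv, dif_neg hm, dif_neg hc] at hdep
          obtain ⟨a, b, hab, hne⟩ := hdep
          have hne' : ¬ (f' (fun w : ↥W => a ↑w) ⟨v, hWmem hv hc⟩
              = f' (fun w : ↥W => b ↑w) ⟨v, hWmem hv hc⟩) := fun h => hne h
          by_cases hu : u ∈ W
          · have hdep' : DependsOnCoord (fun y : ↥W → Fin q => f' y ⟨v, hWmem hv hc⟩) ⟨u, hu⟩ := by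
              refine ⟨fun w => a ↑w, fun w => b ↑w, ?_, hne'⟩
              intro w hwu
              exact hab _ (fun h => hwu (Subtype.ext h))
            exact hf' ⟨u, hu⟩ ⟨v, hWmem hv hc⟩ hdep'
          · have heq : (fun w : ↥W => a ↑w) = (fun w : ↥W => b ↑w) :=
              funext fun w => hab _ (fun h => hu (h ▸ w.2))
            exact absurd (congrArg (fun y => f' y ⟨v, hWmem hv hc⟩) heq) hne'
  · -- counting via explicit bijection
    have key : ∀ x : Fin n → Fin q, f x = x →
        ∀ v (hm : ∃ s, s ∈ S ∧ g₀ s = v), x v = x hm.choose :=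
      fun x hx v hm =>
        (congrArg x hm.choose_spec.2.symm).trans (hfixS x hx _ hm.choose_spec.1)
    have hnotm : ∀ (w : ↥W), ¬ ∃ s, s ∈ S ∧ g₀ s = ↑w := by
      rintro w ⟨s, hs, hsw⟩
      exact (hWS w).2 (hsw ▸ (hg₀ s hs).1)
    set φ : {p : Fin n → Fin q // f p = p} → ((↥S → Fin q) × {y : ↥W → Fin q // f' y = y}) :=
      fun x => ⟨fun s => x.1 ↑s, ⟨fun w => x.1 ↑w, by
        funext w
        have hfx := congrFun x.2 ↑w
        simp only [hf, dif_neg (hWS w).1, dif_neg (hnotm w), dif_neg (hWS w).2] at hfx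
        have : (⟨↑w, hWmem (hWS w).1 (hWS w).2⟩ : ↥W) = w := Subtype.ext rfl
        rw [this] at hfx
        exact hfx⟩⟩ with hφ
    have hbij : Function.Bijective φ := by
      constructor
      · rintro ⟨x, hx⟩ ⟨y, hy⟩ hxy
        have h1 : ∀ s : ↥S, x ↑s = y ↑s := fun s => congrFun (congrArg Prod.fst hxy) s
        have h2 : ∀ w : ↥W, x ↑w = y ↑w := fun w =>
          congrFun (congrArg (fun p => (Prod.snd p).1) hxy) w
        refine Subtype.ext (funext fun v => ?_)
        show x v = y v
        by_cases hv : v ∈ S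
        · exact h1 ⟨v, hv⟩
        · by_cases hm : ∃ s, s ∈ S ∧ g₀ s = v
          · rw [key x hx v hm, key y hy v hm]
            exact h1 ⟨hm.choose, hm.choose_spec.1⟩
          · by_cases hc : v ∈ C
            · have hx' := congrFun hx v
              have hy' := congrFun hy v
              simp only [hf, dif_neg hv, dif_neg hm, dif_pos hc] at hx' hy'
              rw [← hx', ← hy']
            · exact h2 ⟨v, hWmem hv hc⟩
      · rintro ⟨a, ⟨y, hy⟩⟩
        set x : Fin n → Fin q := fun v =>
          if hv : v ∈ S then a ⟨v, hv⟩
          else if hm : ∃ s, s ∈ S ∧ g₀ s = v then a ⟨hm.choose, hm.choose_spec.1⟩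
          else if hc : v ∈ C then z
          else y ⟨v, hWmem hv hc⟩ with hx
        have hxW : (fun w : ↥W => x ↑w) = y := by
          funext w
          simp only [hx, dif_neg (hWS w).1, dif_neg (hnotm w), dif_neg (hWS w).2]
        have hxS : ∀ (v) (hv : v ∈ S), x v = a ⟨v, hv⟩ := by
          intro v hv; simp only [hx, dif_pos hv]
        have hfix : f x = x := by
          funext v
          by_cases hv : v ∈ S
          · -- f x v = x (g₀ v)
            have hg := hg₀ v hv
            have hgS : g₀ v ∉ S := hCS hg.1
            have hgm : ∃ s, s ∈ S ∧ g₀ s = g₀ v := ⟨v, hv, rfl⟩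
            have hchoose : hgm.choose = v := hinj hgm.choose_spec.1 hv hgm.choose_spec.2
            have e1 : f x v = x (g₀ v) := by simp only [hf, dif_pos hv]
            have e2 : x (g₀ v) = a ⟨hgm.choose, hgm.choose_spec.1⟩ := by
              simp only [hx, dif_neg hgS, dif_pos hgm]
            rw [e1, e2, hxS v hv]
            exact congrArg a (Subtype.ext hchoose)
          · by_cases hm : ∃ s, s ∈ S ∧ g₀ s = v
            · have e1 : f x v = x hm.choose := by simp only [hf, dif_neg hv, dif_pos hm]
              rw [e1, hxS _ hm.choose_spec.1]
              simp only [hx, dif_neg hv, dif_pos hm]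
            · by_cases hc : v ∈ C
              · simp only [hf, hx, dif_neg hv, dif_neg hm, dif_pos hc]
              · have e1 : f x v = f' (fun w => x ↑w) ⟨v, hWmem hv hc⟩ := by
                  simp only [hf, dif_neg hv, dif_neg hm, dif_neg hc]
                rw [e1, hxW, congrFun hy _]
                simp only [hx, dif_neg hv, dif_neg hm, dif_neg hc]
        refine ⟨⟨x, hfix⟩, ?_⟩
        simp only [hφ]
        refine Prod.ext ?_ (Subtype.ext ?_)
        · funext s
          exact (hxS ↑s s.2).trans (congrArg a (Subtype.ext rfl))
        · exact hxW
    -- now count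
    have hcard : Nat.card {p : Fin n → Fin q // f p = p}
        = Nat.card ((↥S → Fin q) × {y : ↥W → Fin q // f' y = y}) :=
      Nat.card_congr (Equiv.ofBijective φ hbij)
    have h1 : Set.ncard {p : Fin n → Fin q | f p = p}
        = Nat.card {p : Fin n → Fin q // f p = p} := (Nat.card_coe_set_eq _).symm
    have h2 : Set.ncard {y : ↥W → Fin q | f' y = y}
        = Nat.card {y : ↥W → Fin q // f' y = y} := (Nat.card_coe_set_eq _).symm
    rw [h1, h2, hcard, Nat.card_prod, Nat.card_fun,
      Nat.card_eq_fintype_card (α := Fin q), Fintype.card_fin, Nat.card_coe_set_eq]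

lemma nat_card_sigma {ι : Type*} [Fintype ι] (β : ι → Type*) [∀ i, Finite (β i)] :
    Nat.card ((i : ι) × β i) = ∑ i, Nat.card (β i) := by
  classical
  have : ∀ i, Fintype (β i) := fun i => Fintype.ofFinite _
  simp [Nat.card_eq_fintype_card, Fintype.card_sigma]

lemma lemB {n : ℕ} (G : SimpleGraph (Fin n)) (S C W : Set (Fin n))
    (hC : C = cSet G S) (hW : W = (C ∪ S)ᶜ) (q : ℕ) (hq : 0 < q)
    (f : (Fin n → Fin q) → Fin n → Fin q) (hf : IGLe G f) :
    ∃ f' : ((↥W) → Fin q) → (↥W) → Fin q, IGLe (G.induce W) f' ∧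
      Set.ncard {p : Fin n → Fin q | f p = p}
        ≤ q ^ S.ncard * Set.ncard {y : ↥W → Fin q | f' y = y} := by
  classical
  have z : Fin q := ⟨0, hq⟩
  have hWmem : ∀ {v : Fin n}, v ∉ S → v ∉ C → v ∈ W := by
    intro v h1 h2
    rw [hW, Set.mem_compl_iff, Set.mem_union]
    rintro (h | h) <;> [exact h2 h; exact h1 h]
  have hWS : ∀ (w : ↥W), (↑w : Fin n) ∉ S ∧ (↑w : Fin n) ∉ C := by
    intro w
    have h2 : (↑w : Fin n) ∈ (C ∪ S)ᶜ := by rw [← hW]; exact w.2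
    rw [Set.mem_compl_iff, Set.mem_union] at h2
    exact ⟨fun h => h2 (Or.inr h), fun h => h2 (Or.inl h)⟩
  -- base extension
  set σ : (↥S → Fin q) → Fin n → Fin q := fun a v => if hv : v ∈ S then a ⟨v, hv⟩ else z
    with hσ
  set ext : (↥S → Fin q) → (↥W → Fin q) → Fin n → Fin q := fun a y v =>
    if hv : v ∈ S then a ⟨v, hv⟩
    else if hc : v ∈ C then f (σ a) v
    else y ⟨v, hWmem hv hc⟩ with hext
  set F : (↥S → Fin q) → ((↥W) → Fin q) → (↥W) → Fin q :=
    fun a y w => f (ext a y) ↑w with hF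
  -- each F a has interaction graph inside induced graph
  have hIG : ∀ a, IGLe (G.induce W) (F a) := by
    intro a u v hdep
    obtain ⟨y₁, y₂, hy, hne⟩ := hdep
    have hne' : ¬ (f (ext a y₁) ↑v = f (ext a y₂) ↑v) := fun h => hne h
    have hdep' : DependsOnCoord (fun x => f x ↑v) ↑u := by
      refine ⟨ext a y₁, ext a y₂, ?_, hne'⟩
      intro w hwu
      simp only [hext]
      by_cases hv' : w ∈ S
      · simp [dif_pos hv']
      · by_cases hc' : w ∈ C
        · simp [dif_neg hv', dif_pos hc']
        · simp only [dif_neg hv', dif_neg hc']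
          exact hy _ (fun h => hwu (congrArg Subtype.val h))
    have := hf ↑u ↑v hdep'
    exact this
  -- fixed points of f are reconstructed from their S- and W-parts
  have hrec : ∀ x : Fin n → Fin q, f x = x →
      ext (fun s => x ↑s) (fun w => x ↑w) = x := by
    intro x hx
    funext v
    simp only [hext]
    by_cases hv : v ∈ S
    · simp [dif_pos hv]
    · by_cases hc : v ∈ C
      · simp only [dif_neg hv, dif_pos hc]
        have hcv : v ∈ cSet G S := hC ▸ hc
        have hTdep : ∀ u, DependsOnCoord (fun x => f x v) u → u ∈ S := by
          intro u hd
          exact hcv.2 u ((hf u v hd).symm)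
        have : f (σ (fun s => x ↑s)) v = f x v :=
          eq_of_agreeOn hTdep _ _ (by
            intro w hw
            simp only [hσ, dif_pos hw])
        rw [this, congrFun hx v]
      · simp [dif_neg hv, dif_neg hc]
  -- restriction map into sigma type
  have hfixW : ∀ (x : Fin n → Fin q), f x = x →
      F (fun s => x ↑s) (fun w : ↥W => x ↑w) = (fun w : ↥W => x ↑w) := by
    intro x hx
    funext w
    simp only [hF]
    rw [hrec x hx, congrFun hx ↑w]
  set Ψ : {p : Fin n → Fin q // f p = p} →
      (a : ↥S → Fin q) × {y : ↥W → Fin q // F a y = y} :=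
    fun x => ⟨fun s => x.1 ↑s, ⟨fun w => x.1 ↑w, hfixW x.1 x.2⟩⟩ with hΨ
  have hΨinj : Function.Injective Ψ := by
    have hcomp : Function.Injective
        ((fun p : (a : ↥S → Fin q) × {y : ↥W → Fin q // F a y = y} => (p.1, p.2.1)) ∘ Ψ) := by
      intro x x' h
      have h1 : (fun s : ↥S => x.1 ↑s) = (fun s : ↥S => x'.1 ↑s) := congrArg Prod.fst h
      have h2 : (fun w : ↥W => x.1 ↑w) = (fun w : ↥W => x'.1 ↑w) := congrArg Prod.snd h
      refine Subtype.ext ?_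
      rw [← hrec x.1 x.2, ← hrec x'.1 x'.2, h1, h2]
    exact Function.Injective.of_comp hcomp
  -- cardinalities
  have hle : Nat.card {p : Fin n → Fin q // f p = p}
      ≤ Nat.card ((a : ↥S → Fin q) × {y : ↥W → Fin q // F a y = y}) :=
    Nat.card_le_card_of_injective Ψ hΨinj
  rw [nat_card_sigma] at hle
  -- pick a maximizer
  have hne : (Finset.univ : Finset (↥S → Fin q)).Nonempty := by
    have : Nonempty (Fin q) := ⟨z⟩
    exact Finset.univ_nonempty
  obtain ⟨a₀, _, ha₀⟩ := Finset.exists_max_image Finset.univ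
    (fun a => Nat.card {y : ↥W → Fin q // F a y = y}) hne
  refine ⟨F a₀, hIG a₀, ?_⟩
  have hsum : ∑ a : ↥S → Fin q, Nat.card {y : ↥W → Fin q // F a y = y}
      ≤ (Fintype.card (↥S → Fin q)) * Nat.card {y : ↥W → Fin q // F a₀ y = y} := by
    calc ∑ a : ↥S → Fin q, Nat.card {y : ↥W → Fin q // F a y = y}
        ≤ ∑ _a : ↥S → Fin q, Nat.card {y : ↥W → Fin q // F a₀ y = y} :=
          Finset.sum_le_sum (fun a _ => ha₀ a (Finset.mem_univ a))
      _ = (Fintype.card (↥S → Fin q)) * Nat.card {y : ↥W → Fin q // F a₀ y = y} := by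
          simp [Finset.sum_const, Finset.card_univ, Nat.smul_one_eq_cast]
  have hcardfun : Fintype.card (↥S → Fin q) = q ^ S.ncard := by
    rw [Fintype.card_fun, Fintype.card_fin, ← Nat.card_coe_set_eq,
      Nat.card_eq_fintype_card]
  have e1 : Set.ncard {p : Fin n → Fin q | f p = p}
      = Nat.card {p : Fin n → Fin q // f p = p} := (Nat.card_coe_set_eq _).symm
  have e2 : Set.ncard {y : ↥W → Fin q | F a₀ y = y}
      = Nat.card {y : ↥W → Fin q // F a₀ y = y} := (Nat.card_coe_set_eq _).symm
  rw [e1, e2]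
  calc Nat.card {p : Fin n → Fin q // f p = p}
      ≤ ∑ a : ↥S → Fin q, Nat.card {y : ↥W → Fin q // F a y = y} := hle
    _ ≤ (Fintype.card (↥S → Fin q)) * Nat.card {y : ↥W → Fin q // F a₀ y = y} := hsum
    _ = q ^ S.ncard * Nat.card {y : ↥W → Fin q // F a₀ y = y} := by rw [hcardfun]

lemma const_mem {V : Type*} {q : ℕ} (G : SimpleGraph V) (hq : 0 < q) :
    ∃ f : (V → Fin q) → (V → Fin q), IGLe G f ∧
      Set.ncard {p : V → Fin q | f p = p} = 1 := by
  refine ⟨fun _ _ => ⟨0, hq⟩, fun u v hdep => ?_, ?_⟩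
  · obtain ⟨a, b, _, hne⟩ := hdep
    exact absurd rfl hne
  · have : {p : V → Fin q | (fun _ : V => (⟨0, hq⟩ : Fin q)) = p}
        = {fun _ : V => (⟨0, hq⟩ : Fin q)} := by
      ext p; simp [eq_comm]
    rw [this, Set.ncard_singleton]

lemma zero_mem_guessingSet {V : Type*} (G : SimpleGraph V) {q : ℕ} (hq : 0 < q) :
    (0 : ℝ) ∈ {x : ℝ | ∃ f : (V → Fin q) → (V → Fin q),
      IGLe G f ∧ x = Real.logb q (Set.ncard {p : V → Fin q | f p = p})} := by
  obtain ⟨f, hf, hone⟩ := const_mem G hq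
  exact ⟨f, hf, by rw [hone]; simp⟩

lemma ncard_fix_le {V : Type*} [Finite V] {q : ℕ}
    (f : (V → Fin q) → (V → Fin q)) :
    Set.ncard {p : V → Fin q | f p = p} ≤ q ^ Nat.card V := by
  calc Set.ncard {p : V → Fin q | f p = p} ≤ Set.ncard (Set.univ : Set (V → Fin q)) :=
        Set.ncard_le_ncard (Set.subset_univ _) (Set.finite_univ)
    _ = Nat.card (V → Fin q) := Set.ncard_univ _
    _ = q ^ Nat.card V := by rw [Nat.card_fun, Nat.card_eq_fintype_card (α := Fin q),
        Fintype.card_fin]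

lemma logb_nat_le {q N M : ℕ} (hq : 2 ≤ q) (h : N ≤ M) (hM : 1 ≤ M) :
    Real.logb q N ≤ Real.logb q M := by
  have hq1 : (1 : ℝ) < q := by exact_mod_cast hq
  rcases Nat.eq_zero_or_pos N with rfl | hN
  · simpa using Real.logb_nonneg hq1 (by exact_mod_cast hM)
  · exact (Real.logb_le_logb hq1 (by exact_mod_cast hN) (by positivity)).mpr
      (by exact_mod_cast h)

lemma guessingSet_le_card {V : Type*} [Finite V] (G : SimpleGraph V) {q : ℕ} (hq : 2 ≤ q) :
    ∀ x ∈ {x : ℝ | ∃ f : (V → Fin q) → (V → Fin q),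
      IGLe G f ∧ x = Real.logb q (Set.ncard {p : V → Fin q | f p = p})},
      x ≤ (Nat.card V : ℝ) := by
  rintro x ⟨f, _, rfl⟩
  have hq1 : (1 : ℝ) < q := by exact_mod_cast hq
  calc Real.logb q (Set.ncard {p : V → Fin q | f p = p})
      ≤ Real.logb q ((q : ℕ) ^ Nat.card V : ℕ) :=
        logb_nat_le hq (ncard_fix_le f) (Nat.one_le_iff_ne_zero.mpr (by positivity))
    _ = (Nat.card V : ℝ) := by
        push_cast
        rw [Real.logb_pow, Real.logb_self_eq_one hq1, mul_one]

lemma logb_pow_mul {q s N : ℕ} (hq : 2 ≤ q) (hN : N ≠ 0) :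
    Real.logb q ((q ^ s * N : ℕ) : ℝ) = (s : ℝ) + Real.logb q N := by
  have hq1 : (1 : ℝ) < q := by exact_mod_cast hq
  have hq0 : (q : ℝ) ≠ 0 := by positivity
  push_cast
  rw [Real.logb_mul (by positivity) (by exact_mod_cast hN), Real.logb_pow,
    Real.logb_self_eq_one hq1, mul_one]

lemma guessing_split {n : ℕ} (G : SimpleGraph (Fin n)) (S C W : Set (Fin n))
    (hC : C = cSet G S) (hW : W = (C ∪ S)ᶜ)
    (g₀ : Fin n → Fin n) (hg₀ : ∀ s ∈ S, g₀ s ∈ C ∧ G.Adj (g₀ s) s)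
    (hinj : Set.InjOn g₀ S) (q : ℕ) (hq : 2 ≤ q) :
    guessing G q = (S.ncard : ℝ) + guessing (G.induce W) q := by
  have hq0 : 0 < q := by omega
  set A := {x : ℝ | ∃ f : (Fin n → Fin q) → (Fin n → Fin q),
    IGLe G f ∧ x = Real.logb q (Set.ncard {p : Fin n → Fin q | f p = p})} with hA
  set A' := {x : ℝ | ∃ f : ((↥W) → Fin q) → ((↥W) → Fin q),
    IGLe (G.induce W) f ∧ x = Real.logb q (Set.ncard {p : (↥W) → Fin q | f p = p})} with hA'
  have hAne : A.Nonempty := ⟨0, zero_mem_guessingSet G hq0⟩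
  have hA'ne : A'.Nonempty := ⟨0, zero_mem_guessingSet _ hq0⟩
  have hAbdd : BddAbove A := ⟨(Nat.card (Fin n) : ℝ), fun x hx => guessingSet_le_card G hq x hx⟩
  have hA'bdd : BddAbove A' :=
    ⟨(Nat.card ↥W : ℝ), fun x hx => guessingSet_le_card _ hq x hx⟩
  have hguess : guessing G q = sSup A := rfl
  have hguess' : guessing (G.induce W) q = sSup A' := rfl
  -- s + Real.logb q N' ∈ A whenever f' realizes N' ≥ 1
  have hmemA : ∀ f' : ((↥W) → Fin q) → ((↥W) → Fin q), IGLe (G.induce W) f' →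
      Set.ncard {y : (↥W) → Fin q | f' y = y} ≠ 0 →
      (S.ncard : ℝ) + Real.logb q (Set.ncard {y : (↥W) → Fin q | f' y = y}) ∈ A := by
    intro f' hf' hN'
    obtain ⟨f, hf, hcard⟩ := lemA G S C W hC hW g₀ hg₀ hinj q hq0 f' hf'
    refine ⟨f, hf, ?_⟩
    rw [hcard]
    exact (logb_pow_mul hq hN').symm
  rw [hguess, hguess']
  apply le_antisymm
  · -- upper bound
    apply csSup_le hAne
    rintro x ⟨f, hf, rfl⟩
    obtain ⟨f', hf', hle⟩ := lemB G S C W hC hW q hq0 f hf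
    rcases Nat.eq_zero_or_pos (Set.ncard {p : Fin n → Fin q | f p = p}) with h0 | hpos
    · rw [h0]
      simp only [Nat.cast_zero, Real.logb_zero]
      have h1 : (0 : ℝ) ≤ sSup A' := le_csSup hA'bdd (zero_mem_guessingSet _ hq0)
      positivity
    · have hN' : Set.ncard {y : (↥W) → Fin q | f' y = y} ≠ 0 := by
        intro h0
        rw [h0, mul_zero] at hle
        omega
      have step1 : Real.logb q (Set.ncard {p : Fin n → Fin q | f p = p})
          ≤ Real.logb q ((q ^ S.ncard * Set.ncard {y : (↥W) → Fin q | f' y = y} : ℕ)) :=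
        logb_nat_le hq hle (Nat.one_le_iff_ne_zero.mpr (Nat.mul_ne_zero (pow_ne_zero _ (by omega)) hN'))
      have step2 : Real.logb q ((q ^ S.ncard * Set.ncard {y : (↥W) → Fin q | f' y = y} : ℕ) : ℝ)
          = (S.ncard : ℝ) + Real.logb q (Set.ncard {y : (↥W) → Fin q | f' y = y}) :=
        logb_pow_mul hq hN'
      have step3 : Real.logb q (Set.ncard {y : (↥W) → Fin q | f' y = y}) ≤ sSup A' :=
        le_csSup hA'bdd ⟨f', hf', rfl⟩
      calc Real.logb q (Set.ncard {p : Fin n → Fin q | f p = p})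
          ≤ _ := step1
        _ = _ := step2
        _ ≤ (S.ncard : ℝ) + sSup A' := by linarith
  · -- lower bound
    have key : sSup A' ≤ sSup A - (S.ncard : ℝ) := by
      apply csSup_le hA'ne
      rintro x ⟨f', hf', rfl⟩
      rcases Nat.eq_zero_or_pos (Set.ncard {y : (↥W) → Fin q | f' y = y}) with h0 | hpos
      · rw [h0]
        simp only [Nat.cast_zero, Real.logb_zero]
        -- need s ≤ sSup A, via the constant strategy on W
        obtain ⟨fc, hfc, hone⟩ := const_mem (G.induce W) hq0
        have := hmemA fc hfc (by rw [hone]; omega)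
        rw [hone] at this
        simp only [Nat.cast_one, Real.logb_one, add_zero] at this
        have := le_csSup hAbdd this
        linarith
      · have := hmemA f' hf' (by omega)
        have hle := le_csSup hAbdd this
        linarith
    linarith

/-- If the bipartite subgraph of `G` between `c(S)` and `S` has a matching saturating the
nonempty set `S`, then `H(G) = |S| + H(G - d(S))` where `d(S) = c(S) ∪ S`. -/
theorem entropy_eq_card_add_entropy_deleted {n : ℕ} (G : SimpleGraph (Fin n))
    (S : Set (Fin n)) (hS : S.Nonempty)
    (hmatch : HasSaturatingMatching G (cSet G S) S) :
    graphEntropy G =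
      (S.ncard : ℝ) + graphEntropy (G.induce ((cSet G S ∪ S)ᶜ : Set (Fin n))) := by
  classical
  obtain ⟨g₀, hg₀, hinj⟩ := hmatch
  have hsplit : ∀ q : ℕ, 2 ≤ q → guessing G q
      = (S.ncard : ℝ) + guessing (G.induce ((cSet G S ∪ S)ᶜ : Set (Fin n))) q :=
    fun q hq => guessing_split G S (cSet G S) _ rfl rfl g₀ hg₀ hinj q hq
  have hguess_le : ∀ {V : Type} [Finite V] (H : SimpleGraph V) (q : ℕ), 2 ≤ q →
      guessing H q ≤ (Nat.card V : ℝ) := by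
    intro V _ H q hq
    exact csSup_le ⟨0, zero_mem_guessingSet H (by omega)⟩ (guessingSet_le_card H hq)
  set E := {x : ℝ | ∃ q : ℕ, 2 ≤ q ∧ x = guessing G q} with hE
  set E' := {x : ℝ | ∃ q : ℕ, 2 ≤ q ∧
    x = guessing (G.induce ((cSet G S ∪ S)ᶜ : Set (Fin n))) q} with hE'
  have hENe : E.Nonempty := ⟨guessing G 2, 2, le_rfl, rfl⟩
  have hE'Ne : E'.Nonempty :=
    ⟨guessing (G.induce ((cSet G S ∪ S)ᶜ : Set (Fin n))) 2, 2, le_rfl, rfl⟩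
  have hEbdd : BddAbove E := by
    refine ⟨(Nat.card (Fin n) : ℝ), ?_⟩
    rintro x ⟨q, hq, rfl⟩
    exact hguess_le G q hq
  have hE'bdd : BddAbove E' := by
    refine ⟨(Nat.card ↥((cSet G S ∪ S)ᶜ : Set (Fin n)) : ℝ), ?_⟩
    rintro x ⟨q, hq, rfl⟩
    exact hguess_le _ q hq
  have h1 : graphEntropy G = sSup E := rfl
  have h2 : graphEntropy (G.induce ((cSet G S ∪ S)ᶜ : Set (Fin n))) = sSup E' := rfl
  rw [h1, h2]
  apply le_antisymm
  · apply csSup_le hENe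
    rintro x ⟨q, hq, rfl⟩
    rw [hsplit q hq]
    exact add_le_add_right (le_csSup hE'bdd ⟨q, hq, rfl⟩) _
  · have key : sSup E' ≤ sSup E - (S.ncard : ℝ) := by
      apply csSup_le hE'Ne
      rintro x ⟨q, hq, rfl⟩
      have hmem : (S.ncard : ℝ) + guessing (G.induce ((cSet G S ∪ S)ᶜ : Set (Fin n))) q ∈ E :=
        ⟨q, hq, (hsplit q hq).symm⟩
      have := le_csSup hEbdd hmem
      linarith
    linarith


end
end

section
/- There is no finite simple graph G with 1 < H(G) < 2. -/
noncomputable section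

/-! ### Auxiliary machinery -/

/-- `g` is determined by the coordinates in `S`. -/
def DetBy {V : Type*} {q : ℕ} (g : (V → Fin q) → Fin q) (S : Set V) : Prop :=
  ∀ a b : V → Fin q, (∀ w ∈ S, a w = b w) → g a = g b

lemma DetBy.mem_of_dependsOn {V : Type*} {q : ℕ} {g : (V → Fin q) → Fin q} {S : Set V}
    (hd : DetBy g S) {u : V} (h : DependsOnCoord g u) : u ∈ S := by
  by_contra hu
  obtain ⟨a, b, hab, hne⟩ := h
  exact hne (hd a b fun w hw => hab w (fun he => hu (he ▸ hw)))

lemma detBy_of_not_depends {V : Type*} [DecidableEq V] [Fintype V] {q : ℕ}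
    {g : (V → Fin q) → Fin q} {S : Set V}
    (h : ∀ u, u ∉ S → ¬ DependsOnCoord g u) : DetBy g S := by
  classical
  intro a b hab
  suffices H : ∀ (k : ℕ) (a : V → Fin q),
      (Finset.univ.filter (fun w => a w ≠ b w)).card ≤ k →
      (∀ w ∈ S, a w = b w) → g a = g b by
    exact H (Finset.univ.filter (fun w => a w ≠ b w)).card a le_rfl hab
  intro k
  induction k with
  | zero =>
    intro a hcard hab
    have : a = b := by
      funext w
      by_contra hw
      have : w ∈ Finset.univ.filter (fun w => a w ≠ b w) := by simp [hw]
      have := Finset.card_pos.mpr ⟨w, this⟩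
      omega
    rw [this]
  | succ k ih =>
    intro a hcard hab
    by_cases he : a = b
    · rw [he]
    · have : ∃ u, a u ≠ b u := by
        by_contra h'
        push_neg at h'
        exact he (funext h')
      obtain ⟨u, hu⟩ := this
      have huS : u ∉ S := fun h' => hu (hab u h')
      set a' := Function.update a u (b u) with ha'
      have h1 : g a = g a' := by
        by_contra hne
        exact h u huS ⟨a, a', fun w hw => (Function.update_of_ne hw _ _).symm, hne⟩
      rw [h1]
      apply ih
      · have hsub : Finset.univ.filter (fun w => a' w ≠ b w) ⊆
            (Finset.univ.filter (fun w => a w ≠ b w)).erase u := by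
          intro w hw
          simp only [Finset.mem_filter, Finset.mem_univ, true_and] at hw
          have hwu : w ≠ u := by
            intro h'
            subst h'
            simp [ha'] at hw
          rw [Finset.mem_erase]
          refine ⟨hwu, by simp only [Finset.mem_filter, Finset.mem_univ, true_and]
                          rwa [ha', Function.update_of_ne hwu] at hw⟩
        have hu' : u ∈ Finset.univ.filter (fun w => a w ≠ b w) := by simp [hu]
        have := Finset.card_le_card hsub
        have := Finset.card_erase_of_mem hu'
        omega
      · intro w hw
        rcases eq_or_ne w u with rfl | hwu
        · simp [ha']
        · rw [ha', Function.update_of_ne hwu]; exact hab w hw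

lemma fix_ncard_le {n q : ℕ} (f : (Fin n → Fin q) → (Fin n → Fin q)) :
    ({p : Fin n → Fin q | f p = p}).ncard ≤ q ^ n := by
  have h1 : ({p : Fin n → Fin q | f p = p}).ncard ≤ (Set.univ : Set (Fin n → Fin q)).ncard :=
    Set.ncard_le_ncard (Set.subset_univ _) Set.finite_univ
  rwa [Set.ncard_univ, Nat.card_eq_fintype_card, Fintype.card_fun, Fintype.card_fin,
    Fintype.card_fin] at h1

lemma elt_le {n q : ℕ} (hq : 2 ≤ q) {x : ℝ} {G : SimpleGraph (Fin n)}
    (hx : x ∈ {x : ℝ | ∃ f : (Fin n → Fin q) → (Fin n → Fin q),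
      IGLe G f ∧ x = Real.logb q (Set.ncard {p : Fin n → Fin q | f p = p})}) :
    x ≤ n := by
  obtain ⟨f, _, rfl⟩ := hx
  have hb : (1 : ℝ) < q := by exact_mod_cast hq
  rcases Nat.eq_zero_or_pos ({p : Fin n → Fin q | f p = p}).ncard with h0 | hpos
  · rw [h0]; simp
  · calc Real.logb q (({p : Fin n → Fin q | f p = p}).ncard)
        ≤ Real.logb q ((q : ℝ) ^ n) := by
          apply Real.logb_le_logb_of_le hb (by exact_mod_cast hpos)
          exact_mod_cast fix_ncard_le f
      _ = n := by
          rw [Real.logb_pow, Real.logb_self_eq_one hb, mul_one]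

lemma gset_nonempty {n q : ℕ} (hq : 2 ≤ q) (G : SimpleGraph (Fin n)) :
    {x : ℝ | ∃ f : (Fin n → Fin q) → (Fin n → Fin q),
      IGLe G f ∧ x = Real.logb q (Set.ncard {p : Fin n → Fin q | f p = p})}.Nonempty := by
  refine ⟨_, fun _ _ => ⟨0, by omega⟩, fun u v h => absurd h ?_, rfl⟩
  rintro ⟨a, b, -, hne⟩
  exact hne rfl

lemma gset_bddAbove {n q : ℕ} (hq : 2 ≤ q) (G : SimpleGraph (Fin n)) :
    BddAbove {x : ℝ | ∃ f : (Fin n → Fin q) → (Fin n → Fin q),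
      IGLe G f ∧ x = Real.logb q (Set.ncard {p : Fin n → Fin q | f p = p})} :=
  ⟨n, fun _ hx => elt_le hq hx⟩

lemma guessing_le {n q : ℕ} (hq : 2 ≤ q) {G : SimpleGraph (Fin n)} {B : ℝ}
    (hB : ∀ f : (Fin n → Fin q) → (Fin n → Fin q), IGLe G f →
      Real.logb q (Set.ncard {p : Fin n → Fin q | f p = p}) ≤ B) :
    guessing G q ≤ B :=
  csSup_le (gset_nonempty hq G) (by rintro x ⟨f, hf, rfl⟩; exact hB f hf)

lemma le_guessing {n q : ℕ} (hq : 2 ≤ q) {G : SimpleGraph (Fin n)}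
    (f : (Fin n → Fin q) → (Fin n → Fin q)) (hf : IGLe G f) :
    Real.logb q (Set.ncard {p : Fin n → Fin q | f p = p}) ≤ guessing G q :=
  le_csSup (gset_bddAbove hq G) ⟨f, hf, rfl⟩

lemma guessing_le_n {n q : ℕ} (hq : 2 ≤ q) (G : SimpleGraph (Fin n)) :
    guessing G q ≤ n :=
  guessing_le hq (fun f hf => elt_le hq ⟨f, hf, rfl⟩)

lemma le_entropy {n q : ℕ} (hq : 2 ≤ q) (G : SimpleGraph (Fin n)) :
    guessing G q ≤ graphEntropy G :=
  le_csSup ⟨n, by rintro x ⟨q', hq', rfl⟩; exact guessing_le_n hq' G⟩ ⟨q, hq, rfl⟩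

lemma entropy_le {n : ℕ} {G : SimpleGraph (Fin n)} {B : ℝ}
    (hB : ∀ q : ℕ, 2 ≤ q → guessing G q ≤ B) : graphEntropy G ≤ B :=
  csSup_le ⟨guessing G 2, 2, le_rfl, rfl⟩ (by rintro x ⟨q, hq, rfl⟩; exact hB q hq)

/-! ### Upper bound for stars -/

lemma fix_ncard_le_q {n q : ℕ} {G : SimpleGraph (Fin n)} (c : Fin n)
    (hc : ∀ u v : Fin n, G.Adj u v → u = c ∨ v = c)
    (f : (Fin n → Fin q) → (Fin n → Fin q)) (hf : IGLe G f) :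
    ({p : Fin n → Fin q | f p = p}).ncard ≤ q := by
  have hdet : ∀ v : Fin n, v ≠ c → DetBy (fun x => f x v) {c} := by
    intro v hv
    apply detBy_of_not_depends
    intro u hu hdep
    have := hf u v hdep
    rcases hc u v this with h | h
    · exact hu h
    · exact hv h
  have hinj : Set.InjOn (fun p : Fin n → Fin q => p c)
      {p : Fin n → Fin q | f p = p} := by
    intro p hp p' hp' hpc
    simp only [Set.mem_setOf_eq] at hp hp'
    funext v
    rcases eq_or_ne v c with rfl | hv
    · exact hpc
    · calc p v = f p v := by rw [hp]
        _ = f p' v := hdet v hv p p' (by rintro w rfl; exact hpc)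
        _ = p' v := by rw [hp']
  have := Set.ncard_le_ncard_of_injOn (fun p : Fin n → Fin q => p c)
    (fun p _ => Set.mem_univ (p c)) hinj Set.finite_univ
  rwa [Set.ncard_univ, Nat.card_eq_fintype_card, Fintype.card_fin] at this

lemma logb_ncard_le_one {n q : ℕ} (hq : 2 ≤ q) {s : Set (Fin n → Fin q)}
    (h : s.ncard ≤ q) : Real.logb q s.ncard ≤ 1 := by
  have hb : (1 : ℝ) < q := by exact_mod_cast hq
  rcases Nat.eq_zero_or_pos s.ncard with h0 | hpos
  · rw [h0]; simp
  · calc Real.logb q s.ncard ≤ Real.logb q q := by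
          exact Real.logb_le_logb_of_le hb (by exact_mod_cast hpos) (by exact_mod_cast h)
      _ = 1 := Real.logb_self_eq_one hb

lemma fix_ncard_le_one_of_empty {q : ℕ} (f : (Fin 0 → Fin q) → (Fin 0 → Fin q)) :
    ({p : Fin 0 → Fin q | f p = p}).ncard ≤ 1 := by
  apply Set.ncard_le_ncard (Set.subset_univ _) Set.finite_univ |>.trans
  rw [Set.ncard_univ, Nat.card_eq_fintype_card]
  simp

/-! ### Lower-bound constructions -/

lemma four_le_ncard_fix {n : ℕ} (f : (Fin n → Fin 2) → (Fin n → Fin 2))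
    (φ : Fin 2 × Fin 2 → (Fin n → Fin 2)) (hinj : Function.Injective φ)
    (heq : {p : Fin n → Fin 2 | f p = p} = Set.range φ) :
    ({p : Fin n → Fin 2 | f p = p}).ncard = 4 := by
  rw [heq, ← Nat.card_coe_set_eq, Nat.card_range_of_injective hinj]
  simp

lemma constrA {n : ℕ} {G : SimpleGraph (Fin n)} {u v a b : Fin n}
    (huv : G.Adj u v) (hab : G.Adj a b)
    (hua : u ≠ a) (hub : u ≠ b) (hva : v ≠ a) (hvb : v ≠ b) :
    ∃ f : (Fin n → Fin 2) → (Fin n → Fin 2),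
      IGLe G f ∧ ({p : Fin n → Fin 2 | f p = p}).ncard = 4 := by
  classical
  have huv' : u ≠ v := G.ne_of_adj huv
  have hab' : a ≠ b := G.ne_of_adj hab
  set f : (Fin n → Fin 2) → (Fin n → Fin 2) := fun x w =>
    if w = u then x v else if w = v then x u else
    if w = a then x b else if w = b then x a else 0 with hfdef
  refine ⟨f, ?_, ?_⟩
  · intro s t hdep
    by_cases h1 : t = u
    · have hd : DetBy (fun x => f x t) {v} := by
        intro x y hxy
        show f x t = f y t
        simp only [hfdef]
        rw [if_pos h1, if_pos h1, hxy v rfl]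
      have hs := hd.mem_of_dependsOn hdep
      rw [Set.mem_singleton_iff] at hs
      rw [hs, h1]; exact huv.symm
    by_cases h2 : t = v
    · have hd : DetBy (fun x => f x t) {u} := by
        intro x y hxy
        show f x t = f y t
        simp only [hfdef]
        rw [if_neg h1, if_neg h1, if_pos h2, if_pos h2, hxy u rfl]
      have hs := hd.mem_of_dependsOn hdep
      rw [Set.mem_singleton_iff] at hs
      rw [hs, h2]; exact huv
    by_cases h3 : t = a
    · have hd : DetBy (fun x => f x t) {b} := by
        intro x y hxy
        show f x t = f y t
        simp only [hfdef]
        rw [if_neg h1, if_neg h1, if_neg h2, if_neg h2, if_pos h3, if_pos h3, hxy b rfl]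
      have hs := hd.mem_of_dependsOn hdep
      rw [Set.mem_singleton_iff] at hs
      rw [hs, h3]; exact hab.symm
    by_cases h4 : t = b
    · have hd : DetBy (fun x => f x t) {a} := by
        intro x y hxy
        show f x t = f y t
        simp only [hfdef]
        rw [if_neg h1, if_neg h1, if_neg h2, if_neg h2, if_neg h3, if_neg h3,
          if_pos h4, if_pos h4, hxy a rfl]
      have hs := hd.mem_of_dependsOn hdep
      rw [Set.mem_singleton_iff] at hs
      rw [hs, h4]; exact hab
    · exfalso
      have hd : DetBy (fun x => f x t) ∅ := by
        intro x y _
        show f x t = f y t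
        simp only [hfdef]
        rw [if_neg h1, if_neg h1, if_neg h2, if_neg h2, if_neg h3, if_neg h3,
          if_neg h4, if_neg h4]
      exact hd.mem_of_dependsOn hdep
  · have s1 : a ≠ u := Ne.symm hua
    have s2 : b ≠ u := Ne.symm hub
    have s3 : a ≠ v := Ne.symm hva
    have s4 : b ≠ v := Ne.symm hvb
    have s5 : v ≠ u := Ne.symm huv'
    have s6 : b ≠ a := Ne.symm hab'
    set φ : Fin 2 × Fin 2 → (Fin n → Fin 2) := fun c w =>
      if w = u then c.1 else if w = v then c.1 else
      if w = a then c.2 else if w = b then c.2 else 0 with hφdef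
    apply four_le_ncard_fix f φ
    · intro c c' hcc
      have h1 := congrFun hcc u
      have h2 := congrFun hcc a
      simp only [hφdef, if_pos rfl, if_neg s1, if_neg s3] at h1 h2
      exact Prod.ext h1 h2
    · ext p
      simp only [Set.mem_setOf_eq, Set.mem_range]
      constructor
      · intro hp
        refine ⟨(p u, p a), ?_⟩
        funext w
        have hu' := congrFun hp v
        have hb' := congrFun hp b
        simp only [hfdef, if_pos rfl, if_neg s5, if_neg s2, if_neg s4, if_neg s6] at hu' hb'
        simp only [hφdef]
        by_cases hw1 : w = u
        · rw [if_pos hw1, hw1]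
        rw [if_neg hw1]
        by_cases hw2 : w = v
        · rw [if_pos hw2, hw2, ← hu']; simp
        rw [if_neg hw2]
        by_cases hw3 : w = a
        · rw [if_pos hw3, hw3]
        rw [if_neg hw3]
        by_cases hw4 : w = b
        · rw [if_pos hw4, hw4, ← hb']; simp
        rw [if_neg hw4]
        have hw' := congrFun hp w
        simp only [hfdef, if_neg hw1, if_neg hw2, if_neg hw3, if_neg hw4] at hw'
        exact hw'
      · rintro ⟨c, rfl⟩
        funext w
        simp only [hfdef, hφdef]
        by_cases hw1 : w = u
        · simp only [if_pos hw1, if_pos rfl, if_neg s5]; simp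
        rw [if_neg hw1, if_neg hw1]
        by_cases hw2 : w = v
        · simp only [if_pos hw2, if_pos rfl]; simp
        rw [if_neg hw2, if_neg hw2]
        by_cases hw3 : w = a
        · simp only [if_pos hw3, if_pos rfl, if_neg s2, if_neg s4, if_neg s6]; simp
        rw [if_neg hw3, if_neg hw3]
        by_cases hw4 : w = b
        · simp only [if_pos hw4, if_pos rfl, if_neg hua, if_neg hva]; simp [if_neg s1, if_neg s3]
        rw [if_neg hw4, if_neg hw4]

lemma constrB {n : ℕ} {G : SimpleGraph (Fin n)} {u v w : Fin n}
    (huv : G.Adj u v) (hvw : G.Adj v w) (huw : G.Adj u w) :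
    ∃ f : (Fin n → Fin 2) → (Fin n → Fin 2),
      IGLe G f ∧ ({p : Fin n → Fin 2 | f p = p}).ncard = 4 := by
  classical
  have d1 : u ≠ v := G.ne_of_adj huv
  have d2 : v ≠ w := G.ne_of_adj hvw
  have d3 : u ≠ w := G.ne_of_adj huw
  have s1 : v ≠ u := Ne.symm d1
  have s2 : w ≠ v := Ne.symm d2
  have s3 : w ≠ u := Ne.symm d3
  set f : (Fin n → Fin 2) → (Fin n → Fin 2) := fun x t =>
    if t = u then x v + x w else if t = v then x u + x w else
    if t = w then x u + x v else 0 with hfdef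
  refine ⟨f, ?_, ?_⟩
  · intro s t hdep
    by_cases h1 : t = u
    · have hd : DetBy (fun x => f x t) {v, w} := by
        intro x y hxy
        show f x t = f y t
        simp only [hfdef]
        rw [if_pos h1, if_pos h1, hxy v (by simp), hxy w (by simp)]
      have hs := hd.mem_of_dependsOn hdep
      rcases hs with rfl | hs
      · rw [h1]; exact huv.symm
      · rw [Set.mem_singleton_iff] at hs; rw [hs, h1]; exact huw.symm
    by_cases h2 : t = v
    · have hd : DetBy (fun x => f x t) {u, w} := by
        intro x y hxy
        show f x t = f y t
        simp only [hfdef]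
        rw [if_neg h1, if_neg h1, if_pos h2, if_pos h2, hxy u (by simp), hxy w (by simp)]
      have hs := hd.mem_of_dependsOn hdep
      rcases hs with rfl | hs
      · rw [h2]; exact huv
      · rw [Set.mem_singleton_iff] at hs; rw [hs, h2]; exact hvw.symm
    by_cases h3 : t = w
    · have hd : DetBy (fun x => f x t) {u, v} := by
        intro x y hxy
        show f x t = f y t
        simp only [hfdef]
        rw [if_neg h1, if_neg h1, if_neg h2, if_neg h2, if_pos h3, if_pos h3,
          hxy u (by simp), hxy v (by simp)]
      have hs := hd.mem_of_dependsOn hdep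
      rcases hs with rfl | hs
      · rw [h3]; exact huw
      · rw [Set.mem_singleton_iff] at hs; rw [hs, h3]; exact hvw
    · exfalso
      have hd : DetBy (fun x => f x t) ∅ := by
        intro x y _
        show f x t = f y t
        simp only [hfdef]
        rw [if_neg h1, if_neg h1, if_neg h2, if_neg h2, if_neg h3, if_neg h3]
      exact hd.mem_of_dependsOn hdep
  · set φ : Fin 2 × Fin 2 → (Fin n → Fin 2) := fun c t =>
      if t = u then c.1 + c.2 else if t = v then c.1 else
      if t = w then c.2 else 0 with hφdef
    apply four_le_ncard_fix f φ
    · intro c c' hcc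
      have h1 := congrFun hcc v
      have h2 := congrFun hcc w
      simp only [hφdef, if_pos rfl, if_neg s1, if_neg s3, if_neg s2] at h1 h2
      exact Prod.ext h1 h2
    · have key1 : ∀ x y : Fin 2, x + y + y = x := by decide
      have key2 : ∀ x y : Fin 2, x + y + x = y := by decide
      ext p
      simp only [Set.mem_setOf_eq, Set.mem_range]
      constructor
      · intro hp
        refine ⟨(p v, p w), ?_⟩
        funext t
        have hu' := congrFun hp u
        simp only [hfdef, if_pos rfl] at hu'
        simp only [hφdef]
        by_cases h1 : t = u
        · rw [if_pos h1, h1]; exact hu'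
        rw [if_neg h1]
        by_cases h2 : t = v
        · rw [if_pos h2, h2]
        rw [if_neg h2]
        by_cases h3 : t = w
        · rw [if_pos h3, h3]
        rw [if_neg h3]
        have ht' := congrFun hp t
        simp only [hfdef, if_neg h1, if_neg h2, if_neg h3] at ht'
        exact ht'
      · rintro ⟨c, rfl⟩
        funext t
        simp only [hfdef, hφdef]
        by_cases h1 : t = u
        · simp only [if_pos h1, if_pos rfl, if_neg s1, if_neg s3, if_neg s2]; simp
        rw [if_neg h1, if_neg h1]
        by_cases h2 : t = v
        · simp only [if_pos h2, if_pos rfl, if_neg s3, if_neg s2]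
          exact key1 c.1 c.2
        rw [if_neg h2, if_neg h2]
        by_cases h3 : t = w
        · simp only [if_pos h3, if_pos rfl, if_neg d1, if_neg s1]
          exact key2 c.1 c.2
        rw [if_neg h3, if_neg h3]

lemma logb_four : Real.logb 2 ((4 : ℕ) : ℝ) = 2 := by
  rw [show ((4 : ℕ) : ℝ) = (2 : ℝ) ^ (2 : ℕ) by norm_num, Real.logb_pow,
    Real.logb_self_eq_one one_lt_two, mul_one]
  norm_num

/-- If `G` has no two disjoint edges and no triangle, all its edges pass through one vertex. -/
lemma exists_center {n : ℕ} {G : SimpleGraph (Fin (n + 1))}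
    (hA : ∀ u v a b : Fin (n + 1), G.Adj u v → G.Adj a b →
      u = a ∨ u = b ∨ v = a ∨ v = b)
    (hT : ∀ u v w : Fin (n + 1), G.Adj u v → G.Adj v w → ¬ G.Adj u w) :
    ∃ c : Fin (n + 1), ∀ u v : Fin (n + 1), G.Adj u v → u = c ∨ v = c := by
  by_cases hE : ∃ x y : Fin (n + 1), G.Adj x y
  · obtain ⟨x, y, hxy⟩ := hE
    by_cases hX : ∀ u v : Fin (n + 1), G.Adj u v → u = x ∨ v = x
    · exact ⟨x, hX⟩
    · push_neg at hX
      obtain ⟨u, v, huv, hux, hvx⟩ := hX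
      -- the edge (u,v) shares a vertex with (x,y); since u,v ≠ x, it is y
      have hy : u = y ∨ v = y := by
        rcases hA u v x y huv hxy with h | h | h | h
        · exact absurd h hux
        · exact Or.inl h
        · exact absurd h hvx
        · exact Or.inr h
      refine ⟨y, ?_⟩
      intro s t hst
      by_contra hc
      push_neg at hc
      obtain ⟨hsy, hty⟩ := hc
      -- edge (s,t) shares a vertex with (x,y): it contains x
      have hx' : s = x ∨ t = x := by
        rcases hA s t x y hst hxy with h | h | h | h
        · exact Or.inl h
        · exact absurd h hsy
        · exact Or.inr h
        · exact absurd h hty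
      rcases hy with rfl | rfl
      · -- edge (u, v) with u = y : edge (y, v)
        have hz : s = v ∨ t = v := by
          rcases hA s t u v hst huv with h | h | h | h
          · exact absurd h hsy
          · exact Or.inl h
          · exact absurd h hty
          · exact Or.inr h
        rcases hx' with rfl | rfl
        · rcases hz with h | rfl
          · exact hvx h.symm
          · -- edge (x = s, t = v): triangle x, u(=y), v
            exact hT s u t hxy huv hst
        · rcases hz with rfl | h
          · -- edge (s = v, t = x): triangle
            exact hT t u s hxy huv hst.symm
          · exact hvx h.symm
      · -- v = y : edge (u, y)
        have hz : s = u ∨ t = u := by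
          rcases hA s t u v hst huv with h | h | h | h
          · exact Or.inl h
          · exact absurd h hsy
          · exact Or.inr h
          · exact absurd h hty
        rcases hx' with rfl | rfl
        · rcases hz with h | rfl
          · exact hux h.symm
          · -- edge (x = s, t = u): triangle x, u, y : Adj x u, Adj u y, Adj x y
            exact hT s t v hst huv hxy
        · rcases hz with rfl | h
          · exact hT t s v hst.symm huv hxy
          · exact hux h.symm
  · push_neg at hE
    exact ⟨0, fun u v h => absurd h (hE u v)⟩

/-- There is no finite simple graph whose entropy lies strictly between 1 and 2. -/
theorem no_entropy_between_one_and_two :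
    ¬ ∃ (n : ℕ) (G : SimpleGraph (Fin n)),
      1 < graphEntropy G ∧ graphEntropy G < 2 := by
  rintro ⟨n, G, h1, h2⟩
  -- helper : a function with 4 fixed points at q = 2 forces entropy ≥ 2
  have hBig : ∀ (f : (Fin n → Fin 2) → (Fin n → Fin 2)), IGLe G f →
      ({p : Fin n → Fin 2 | f p = p}).ncard = 4 → False := by
    intro f hf hc
    have hg := le_guessing le_rfl f hf
    rw [hc] at hg
    rw [show ((2 : ℕ) : ℝ) = (2 : ℝ) by norm_num, logb_four] at hg
    have := le_entropy (le_refl 2) G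
    linarith
  by_cases hA : ∃ u v a b : Fin n, G.Adj u v ∧ G.Adj a b ∧
      u ≠ a ∧ u ≠ b ∧ v ≠ a ∧ v ≠ b
  · obtain ⟨u, v, a, b, e1, e2, d1, d2, d3, d4⟩ := hA
    obtain ⟨f, hf, hc⟩ := constrA e1 e2 d1 d2 d3 d4
    exact hBig f hf hc
  by_cases hT : ∃ u v w : Fin n, G.Adj u v ∧ G.Adj v w ∧ G.Adj u w
  · obtain ⟨u, v, w, e1, e2, e3⟩ := hT
    obtain ⟨f, hf, hc⟩ := constrB e1 e2 e3
    exact hBig f hf hc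
  · -- star case: entropy ≤ 1
    push_neg at hA hT
    cases n with
    | zero =>
      have : graphEntropy G ≤ 1 := by
        apply entropy_le
        intro q hq
        apply guessing_le hq
        intro f hf
        apply logb_ncard_le_one hq
        exact (fix_ncard_le_one_of_empty f).trans (by omega)
      linarith
    | succ m =>
      have hA' : ∀ u v a b : Fin (m + 1), G.Adj u v → G.Adj a b →
          u = a ∨ u = b ∨ v = a ∨ v = b := by
        intro u v a b h1' h2'
        by_contra hcon
        push_neg at hcon
        exact hcon.2.2.2 (hA u v a b h1' h2' hcon.1 hcon.2.1 hcon.2.2.1)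
      have hT' : ∀ u v w : Fin (m + 1), G.Adj u v → G.Adj v w → ¬ G.Adj u w :=
        fun u v w e1 e2 e3 => (hT u v w e1 e2) e3
      obtain ⟨c, hc⟩ := exists_center hA' hT'
      have : graphEntropy G ≤ 1 := by
        apply entropy_le
        intro q hq
        apply guessing_le hq
        intro f hf
        exact logb_ncard_le_one hq (fix_ncard_le_q c hc f hf)
      linarith

end
end

section
/- The entropy of the graph G₁ on vertex set {1,…,7} with edge set {12, 23, 34, 45, 51, 67, 16, 26, 47} equals 11/3. -/
noncomputable section

/-- The graph `G₁` on vertices `{1,…,7}` (here `0,…,6 : Fin 7`) with edges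
`12, 23, 34, 45, 51, 67, 16, 26, 47`. -/
def G1 : SimpleGraph (Fin 7) := SimpleGraph.fromRel fun u v =>
  (u = 0 ∧ v = 1) ∨ (u = 1 ∧ v = 2) ∨ (u = 2 ∧ v = 3) ∨ (u = 3 ∧ v = 4) ∨ (u = 4 ∧ v = 0) ∨
  (u = 5 ∧ v = 6) ∨ (u = 0 ∧ v = 5) ∨ (u = 1 ∧ v = 5) ∨ (u = 3 ∧ v = 6)

namespace EG1




variable {q : ℕ}

/-- restriction of a configuration to a set of coordinates -/
def res (A : Finset (Fin 7)) (x : Fin 7 → Fin q) : Fin 7 → Option (Fin q) :=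
  fun u => if u ∈ A then some (x u) else none

/-- restriction of an option-valued configuration -/
def resO (A : Finset (Fin 7)) (g : Fin 7 → Option (Fin q)) : Fin 7 → Option (Fin q) :=
  fun u => if u ∈ A then g u else none

lemma res_eq_iff {A : Finset (Fin 7)} {z x : Fin 7 → Fin q} :
    res A z = res A x ↔ ∀ u ∈ A, z u = x u := by
  constructor
  · intro h u hu
    have := congrFun h u
    simp only [res, if_pos hu, Option.some_inj] at this
    exact this
  · intro h
    funext u
    by_cases hu : u ∈ A
    · simp [res, hu, h u hu]
    · simp [res, hu]

lemma resO_res {A B : Finset (Fin 7)} (h : A ⊆ B) (x : Fin 7 → Fin q) :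
    resO A (res B x) = res A x := by
  funext u
  by_cases hu : u ∈ A
  · simp [resO, res, hu, h hu]
  · simp [resO, res, hu]

variable (S : Finset (Fin 7 → Fin q))

/-- size of the fiber of `g` under `res A` -/
def nf (A : Finset (Fin 7)) (g : Fin 7 → Option (Fin q)) : ℕ :=
  (S.filter fun z => res A z = g).card

/-- entropy of the coordinates in `A` under the uniform distribution on `S` -/
def ent (A : Finset (Fin 7)) : ℝ :=
  Real.log S.card - (∑ x ∈ S, Real.log (nf S A (res A x))) / S.card

variable {S}

lemma nf_pos {A : Finset (Fin 7)} {x : Fin 7 → Fin q} (hx : x ∈ S) :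
    0 < nf S A (res A x) :=
  Finset.card_pos.2 ⟨x, Finset.mem_filter.2 ⟨hx, rfl⟩⟩

lemma nf_le_card (A : Finset (Fin 7)) (g : Fin 7 → Option (Fin q)) : nf S A g ≤ S.card :=
  Finset.card_filter_le _ _

lemma fiber_subset_of_subset {A B : Finset (Fin 7)} (h : A ⊆ B) (x : Fin 7 → Fin q) :
    (S.filter fun z => res B z = res B x) ⊆ (S.filter fun z => res A z = res A x) := by
  intro z hz
  rw [Finset.mem_filter] at hz ⊢
  refine ⟨hz.1, ?_⟩
  rw [← resO_res h x, ← resO_res h z, hz.2]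

lemma nf_mono {A B : Finset (Fin 7)} (h : A ⊆ B) (x : Fin 7 → Fin q) :
    nf S B (res B x) ≤ nf S A (res A x) :=
  Finset.card_le_card (fiber_subset_of_subset h x)

lemma ent_empty (hS : S.Nonempty) : ent S ∅ = 0 := by
  have hcard : (0:ℝ) < S.card := by exact_mod_cast Finset.card_pos.2 hS
  have : ∀ x ∈ S, Real.log (nf S ∅ (res ∅ x)) = Real.log S.card := by
    intro x hx
    congr 1
    norm_cast
    unfold nf
    rw [Finset.filter_true_of_mem]
    intro z hz
    rw [res_eq_iff]
    intro u hu
    simp at hu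
  unfold ent
  rw [Finset.sum_congr rfl this, Finset.sum_const, nsmul_eq_mul]
  field_simp
  ring

lemma ent_univ (hS : S.Nonempty) : ent S Finset.univ = Real.log S.card := by
  have : ∀ x ∈ S, Real.log (nf S Finset.univ (res Finset.univ x)) = 0 := by
    intro x hx
    have : nf S Finset.univ (res Finset.univ x) = 1 := by
      unfold nf
      rw [Finset.card_eq_one]
      refine ⟨x, ?_⟩
      ext z
      simp only [Finset.mem_filter, Finset.mem_singleton]
      constructor
      · rintro ⟨hz, h⟩
        funext u
        exact (res_eq_iff.1 h) u (Finset.mem_univ u)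
      · rintro rfl; exact ⟨hx, rfl⟩
    rw [this]; simp
  unfold ent
  rw [Finset.sum_congr rfl this, Finset.sum_const]
  simp

lemma ent_mono {A B : Finset (Fin 7)} (hS : S.Nonempty) (h : A ⊆ B) : ent S A ≤ ent S B := by
  have hcard : (0:ℝ) < S.card := by exact_mod_cast Finset.card_pos.2 hS
  unfold ent
  have hsum : ∑ x ∈ S, Real.log (nf S B (res B x)) ≤ ∑ x ∈ S, Real.log (nf S A (res A x)) := by
    apply Finset.sum_le_sum
    intro x hx
    apply Real.log_le_log (by exact_mod_cast nf_pos hx)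
    exact_mod_cast nf_mono h x
  have hdiv : (∑ x ∈ S, Real.log (nf S B (res B x))) / S.card
      ≤ (∑ x ∈ S, Real.log (nf S A (res A x))) / S.card := by gcongr
  linarith

section more
variable {q : ℕ} {S : Finset (Fin 7 → Fin q)}

lemma nf_insert_eq {A : Finset (Fin 7)} {v : Fin 7}
    (hdet : ∀ z w, z ∈ S → w ∈ S → res A z = res A w → z v = w v)
    {x : Fin 7 → Fin q} (hx : x ∈ S) :
    nf S (insert v A) (res (insert v A) x) = nf S A (res A x) := by
  unfold nf
  congr 1
  apply Finset.filter_congr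
  intro z hz
  constructor
  · intro h
    rw [← resO_res (Finset.subset_insert v A) x, ← resO_res (Finset.subset_insert v A) z, h]
  · intro h
    rw [res_eq_iff] at h ⊢
    intro u hu
    rcases Finset.mem_insert.1 hu with rfl | huA
    · exact hdet z x hz hx (res_eq_iff.2 h)
    · exact h u huA

lemma ent_insert_eq {A : Finset (Fin 7)} {v : Fin 7}
    (hdet : ∀ z w, z ∈ S → w ∈ S → res A z = res A w → z v = w v) :
    ent S (insert v A) = ent S A := by
  unfold ent
  congr 1
  congr 1
  apply Finset.sum_congr rfl
  intro x hx
  rw [nf_insert_eq hdet hx]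

lemma sum_inv_nf (A : Finset (Fin 7)) :
    ∑ x ∈ S, (1 : ℝ) / (nf S A (res A x)) = (S.image (res A)).card := by
  rw [← Finset.sum_fiberwise_of_maps_to (g := res A) (t := S.image (res A))
      (fun x hx => Finset.mem_image_of_mem _ hx)]
  rw [Finset.card_eq_sum_ones (S.image (res A))]
  push_cast
  apply Finset.sum_congr rfl
  intro g hg
  have : ∀ x ∈ S.filter (fun x => res A x = g), (1:ℝ)/(nf S A (res A x)) = 1/(nf S A g) := by
    intro x hx
    rw [(Finset.mem_filter.1 hx).2]
  rw [Finset.sum_congr rfl this, Finset.sum_const, nsmul_eq_mul]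
  have hpos : 0 < nf S A g := by
    obtain ⟨x, hx, rfl⟩ := Finset.mem_image.1 hg
    exact nf_pos hx
  have : ((S.filter fun z => res A z = g).card : ℝ) = (nf S A g : ℝ) := by rfl
  rw [this]
  field_simp

lemma ent_le_log_image (hS : S.Nonempty) (A : Finset (Fin 7)) :
    ent S A ≤ Real.log ((S.image (res A)).card) := by
  have hcard : (0:ℝ) < S.card := by exact_mod_cast Finset.card_pos.2 hS
  set K : ℝ := ((S.image (res A)).card : ℝ) with hK
  have hKpos : 0 < K := by
    rw [hK]
    exact_mod_cast Finset.card_pos.2 (hS.image _)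
  -- pointwise Gibbs
  have key : ∀ x ∈ S, Real.log S.card - Real.log (nf S A (res A x)) - Real.log K
      ≤ (S.card : ℝ) / (nf S A (res A x) * K) - 1 := by
    intro x hx
    have hnpos : (0:ℝ) < nf S A (res A x) := by exact_mod_cast nf_pos hx
    have harg : (0:ℝ) < (S.card : ℝ) / (nf S A (res A x) * K) := by positivity
    have := Real.log_le_sub_one_of_pos harg
    rw [Real.log_div (by positivity) (by positivity), Real.log_mul (by positivity) (by positivity)] at this
    linarith
  have hsumkey := Finset.sum_le_sum key
  rw [Finset.sum_sub_distrib, Finset.sum_sub_distrib, Finset.sum_const, Finset.sum_const] at hsumkey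
  have hrhs : ∑ x ∈ S, ((S.card : ℝ) / (nf S A (res A x) * K) - 1)
      = (S.card : ℝ) / K * (∑ x ∈ S, (1:ℝ)/(nf S A (res A x))) - S.card := by
    rw [Finset.sum_sub_distrib, Finset.sum_const, Finset.mul_sum]
    congr 1
    · apply Finset.sum_congr rfl
      intro x hx
      field_simp
    · simp
  rw [hrhs, sum_inv_nf, ← hK] at hsumkey
  have : (S.card : ℝ) / K * K - S.card = 0 := by field_simp; ring
  rw [this] at hsumkey
  simp only [nsmul_eq_mul] at hsumkey
  unfold ent
  rw [sub_le_iff_le_add, ← sub_le_iff_le_add', le_div_iff₀ hcard]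
  linarith [hsumkey]

end more
section cap
variable {q : ℕ} {S : Finset (Fin 7 → Fin q)}

lemma card_image_res_le (hS : S.Nonempty) (A : Finset (Fin 7)) :
    (S.image (res A)).card ≤ q ^ A.card := by
  obtain ⟨x₀, hx₀⟩ := hS
  have hq0 : 0 < q := (x₀ 0).pos
  have : (S.image (res A)).card ≤ Fintype.card (A → Fin q) := by
    apply Finset.card_le_card_of_injOn (fun g (u : A) => (g u.1).getD ⟨0, hq0⟩)
      (fun g _ => Finset.mem_univ _)
    intro g1 hg1 g2 hg2 heq
    obtain ⟨z1, hz1, rfl⟩ := Finset.mem_image.1 hg1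
    obtain ⟨z2, hz2, rfl⟩ := Finset.mem_image.1 hg2
    funext u
    by_cases hu : u ∈ A
    · have := congrFun heq ⟨u, hu⟩
      simp only [res, if_pos hu, Option.getD_some] at this ⊢
      rw [this]
    · simp [res, hu]
  calc (S.image (res A)).card ≤ Fintype.card (A → Fin q) := this
    _ = q ^ A.card := by simp [Fintype.card_fun]
  
lemma ent_le_card_mul_log (hS : S.Nonempty) (A : Finset (Fin 7)) :
    ent S A ≤ (A.card : ℝ) * Real.log q := by
  refine le_trans (ent_le_log_image hS A) ?_
  have h1 : (0:ℝ) < (S.image (res A)).card := by exact_mod_cast Finset.card_pos.2 (hS.image _)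
  calc Real.log ((S.image (res A)).card) ≤ Real.log ((q : ℝ) ^ A.card) := by
        apply Real.log_le_log h1
        exact_mod_cast card_image_res_le hS A
    _ = (A.card : ℝ) * Real.log q := by rw [Real.log_pow]

end cap

section submod
variable {q : ℕ} {S : Finset (Fin 7 → Fin q)}

lemma resO_resO {I A : Finset (Fin 7)} (h : I ⊆ A) (g : Fin 7 → Option (Fin q)) :
    resO I (resO A g) = resO I g := by
  funext u
  by_cases hu : u ∈ I
  · simp [resO, hu, h hu]
  · simp [resO, hu]

lemma counting (A B : Finset (Fin 7)) :
    ∑ x ∈ S, ((nf S A (res A x) : ℝ) * (nf S B (res B x) : ℝ)) /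
      ((nf S (A ∪ B) (res (A ∪ B) x) : ℝ) * (nf S (A ∩ B) (res (A ∩ B) x) : ℝ))
      ≤ (S.card : ℝ) := by
  classical
  set U := A ∪ B with hU
  set I := A ∩ B with hI
  have hAU : A ⊆ U := Finset.subset_union_left
  have hBU : B ⊆ U := Finset.subset_union_right
  have hIU : I ⊆ U := le_trans Finset.inter_subset_left hAU
  have hIA : I ⊆ A := Finset.inter_subset_left
  have hIB : I ⊆ B := Finset.inter_subset_right
  set F : (Fin 7 → Option (Fin q)) → ℝ := fun g =>
    ((nf S A (resO A g) : ℝ) * (nf S B (resO B g) : ℝ)) /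
      ((nf S U g : ℝ) * (nf S I (resO I g) : ℝ)) with hF
  have step1 : ∑ x ∈ S, ((nf S A (res A x) : ℝ) * (nf S B (res B x) : ℝ)) /
      ((nf S U (res U x) : ℝ) * (nf S I (res I x) : ℝ)) = ∑ x ∈ S, F (res U x) := by
    apply Finset.sum_congr rfl
    intro x hx
    rw [hF]
    simp only [resO_res hAU, resO_res hBU, resO_res hIU]
  rw [step1]
  -- group by fibers of res U
  rw [← Finset.sum_fiberwise_of_maps_to (g := res U) (t := S.image (res U))
      (fun x hx => Finset.mem_image_of_mem _ hx)]
  have step2 : ∀ g ∈ S.image (res U),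
      ∑ x ∈ S.filter (fun x => res U x = g), F (res U x)
        = ((nf S A (resO A g) : ℝ) * (nf S B (resO B g) : ℝ)) / (nf S I (resO I g) : ℝ) := by
    intro g hg
    have hpos : 0 < nf S U g := by
      obtain ⟨x, hx, rfl⟩ := Finset.mem_image.1 hg
      exact nf_pos hx
    have : ∀ x ∈ S.filter (fun x => res U x = g), F (res U x) = F g := by
      intro x hx
      rw [(Finset.mem_filter.1 hx).2]
    rw [Finset.sum_congr rfl this, Finset.sum_const, nsmul_eq_mul]
    have hcf : ((S.filter fun x => res U x = g).card : ℝ) = (nf S U g : ℝ) := by rfl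
    rw [hcf, hF]
    have hne : (nf S U g : ℝ) ≠ 0 := by exact_mod_cast hpos.ne'
    have hcan : (nf S U g : ℝ) * ((nf S U g : ℝ))⁻¹ = 1 := mul_inv_cancel₀ hne
    field_simp
  rw [Finset.sum_congr rfl step2]
  -- group the outer sum by fibers of resO I
  rw [← Finset.sum_fiberwise_of_maps_to (g := resO I) (t := S.image (res I))
      (fun g hg => by
        obtain ⟨x, hx, rfl⟩ := Finset.mem_image.1 hg
        rw [resO_res hIU]
        exact Finset.mem_image_of_mem _ hx)]
  -- it suffices to bound each inner sum by the fiber size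
  have step3 : ∀ h ∈ S.image (res I),
      ∑ g ∈ (S.image (res U)).filter (fun g => resO I g = h),
        ((nf S A (resO A g) : ℝ) * (nf S B (resO B g) : ℝ)) / (nf S I (resO I g) : ℝ)
        ≤ (nf S I h : ℝ) := by
    intro h hh
    have hpos : 0 < nf S I h := by
      obtain ⟨x, hx, rfl⟩ := Finset.mem_image.1 hh
      exact nf_pos hx
    have hposR : (0:ℝ) < (nf S I h : ℝ) := by exact_mod_cast hpos
    have heqden : ∀ g ∈ (S.image (res U)).filter (fun g => resO I g = h),
        ((nf S A (resO A g) : ℝ) * (nf S B (resO B g) : ℝ)) / (nf S I (resO I g) : ℝ)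
        = ((nf S A (resO A g) * nf S B (resO B g) : ℕ) : ℝ) / (nf S I h : ℝ) := by
      intro g hg
      rw [(Finset.mem_filter.1 hg).2]
      push_cast
      ring
    rw [Finset.sum_congr rfl heqden, ← Finset.sum_div]
    rw [div_le_iff₀ hposR]
    have hnat : ∑ g ∈ (S.image (res U)).filter (fun g => resO I g = h),
        nf S A (resO A g) * nf S B (resO B g) ≤ nf S I h * nf S I h := by
      set T := (S.image (res U)).filter (fun g => resO I g = h) with hT
      set FI := S.filter (fun z => res I z = h) with hFI
      have hprod : ∀ g ∈ T, nf S A (resO A g) * nf S B (resO B g)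
          = ((S.filter (fun z => res A z = resO A g)) ×ˢ (S.filter (fun z => res B z = resO B g))).card := by
        intro g hg
        rw [Finset.card_product]
        rfl
      rw [Finset.sum_congr rfl hprod]
      have hdisj : ∀ g₁ ∈ T, ∀ g₂ ∈ T, g₁ ≠ g₂ →
          Disjoint ((S.filter (fun z => res A z = resO A g₁)) ×ˢ (S.filter (fun z => res B z = resO B g₁)))
                   ((S.filter (fun z => res A z = resO A g₂)) ×ˢ (S.filter (fun z => res B z = resO B g₂))) := by
        intro g₁ hg₁ g₂ hg₂ hne
        rw [Finset.disjoint_left]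
        rintro ⟨z, w⟩ hzw1 hzw2
        rw [Finset.mem_product] at hzw1 hzw2
        have hz1 := (Finset.mem_filter.1 hzw1.1).2
        have hw1 := (Finset.mem_filter.1 hzw1.2).2
        have hz2 := (Finset.mem_filter.1 hzw2.1).2
        have hw2 := (Finset.mem_filter.1 hzw2.2).2
        apply hne
        obtain ⟨x₁, hx₁, hgx₁⟩ := Finset.mem_image.1 (Finset.mem_filter.1 hg₁).1
        obtain ⟨x₂, hx₂, hgx₂⟩ := Finset.mem_image.1 (Finset.mem_filter.1 hg₂).1
        funext u
        by_cases huA : u ∈ A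
        · have e1 := congrFun hz1 u
          have e2 := congrFun hz2 u
          simp only [resO, if_pos huA] at e1 e2
          rw [← e1, ← e2]
        · by_cases huB : u ∈ B
          · have e1 := congrFun hw1 u
            have e2 := congrFun hw2 u
            simp only [resO, if_pos huB] at e1 e2
            rw [← e1, ← e2]
          · have huU : u ∉ U := by
              rw [hU]
              simp [huA, huB]
            rw [← hgx₁, ← hgx₂]
            simp [res, huU]
      have hsub : ∀ g ∈ T, ((S.filter (fun z => res A z = resO A g)) ×ˢ (S.filter (fun z => res B z = resO B g)))
          ⊆ FI ×ˢ FI := by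
        intro g hg
        have hgI : resO I g = h := (Finset.mem_filter.1 hg).2
        rintro ⟨z, w⟩ hzw
        rw [Finset.mem_product] at hzw ⊢
        constructor
        · rw [hFI, Finset.mem_filter]
          refine ⟨(Finset.mem_filter.1 hzw.1).1, ?_⟩
          rw [← resO_res hIA z, (Finset.mem_filter.1 hzw.1).2, resO_resO hIA, hgI]
        · rw [hFI, Finset.mem_filter]
          refine ⟨(Finset.mem_filter.1 hzw.2).1, ?_⟩
          rw [← resO_res hIB w, (Finset.mem_filter.1 hzw.2).2, resO_resO hIB, hgI]
      calc ∑ g ∈ T, ((S.filter (fun z => res A z = resO A g)) ×ˢ (S.filter (fun z => res B z = resO B g))).card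
          = (T.biUnion (fun g => (S.filter (fun z => res A z = resO A g)) ×ˢ (S.filter (fun z => res B z = resO B g)))).card := (Finset.card_biUnion hdisj).symm
        _ ≤ (FI ×ˢ FI).card := Finset.card_le_card (Finset.biUnion_subset.2 hsub)
        _ = nf S I h * nf S I h := by rw [Finset.card_product]; rfl
    calc (∑ g ∈ (S.image (res U)).filter (fun g => resO I g = h),
        ((nf S A (resO A g) * nf S B (resO B g) : ℕ) : ℝ))
        = ((∑ g ∈ (S.image (res U)).filter (fun g => resO I g = h),
            nf S A (resO A g) * nf S B (resO B g) : ℕ) : ℝ) := by push_cast; rfl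
      _ ≤ ((nf S I h * nf S I h : ℕ) : ℝ) := by exact_mod_cast hnat
      _ = (nf S I h : ℝ) * (nf S I h : ℝ) := by push_cast; ring
  calc ∑ h ∈ S.image (res I), ∑ g ∈ (S.image (res U)).filter (fun g => resO I g = h),
        ((nf S A (resO A g) : ℝ) * (nf S B (resO B g) : ℝ)) / (nf S I (resO I g) : ℝ)
      ≤ ∑ h ∈ S.image (res I), (nf S I h : ℝ) := Finset.sum_le_sum step3
    _ = (S.card : ℝ) := by
        have := Finset.card_eq_sum_card_fiberwise (f := res I) (s := S) (t := S.image (res I))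
          (fun x hx => Finset.mem_image_of_mem _ hx)
        rw [this]
        push_cast
        rfl

lemma ent_submod (hS : S.Nonempty) (A B : Finset (Fin 7)) :
    ent S (A ∪ B) + ent S (A ∩ B) ≤ ent S A + ent S B := by
  have hcard : (0:ℝ) < S.card := by exact_mod_cast Finset.card_pos.2 hS
  have key : ∀ x ∈ S,
      Real.log (nf S A (res A x)) + Real.log (nf S B (res B x))
        - Real.log (nf S (A ∪ B) (res (A ∪ B) x)) - Real.log (nf S (A ∩ B) (res (A ∩ B) x))
      ≤ ((nf S A (res A x) : ℝ) * (nf S B (res B x) : ℝ)) /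
          ((nf S (A ∪ B) (res (A ∪ B) x) : ℝ) * (nf S (A ∩ B) (res (A ∩ B) x) : ℝ)) - 1 := by
    intro x hx
    have hA : (0:ℝ) < nf S A (res A x) := by exact_mod_cast nf_pos hx
    have hB : (0:ℝ) < nf S B (res B x) := by exact_mod_cast nf_pos hx
    have hU : (0:ℝ) < nf S (A ∪ B) (res (A ∪ B) x) := by exact_mod_cast nf_pos hx
    have hI : (0:ℝ) < nf S (A ∩ B) (res (A ∩ B) x) := by exact_mod_cast nf_pos hx
    have harg : (0:ℝ) < ((nf S A (res A x) : ℝ) * (nf S B (res B x) : ℝ)) /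
          ((nf S (A ∪ B) (res (A ∪ B) x) : ℝ) * (nf S (A ∩ B) (res (A ∩ B) x) : ℝ)) := by positivity
    have := Real.log_le_sub_one_of_pos harg
    rw [Real.log_div (by positivity) (by positivity), Real.log_mul (ne_of_gt hA) (ne_of_gt hB),
      Real.log_mul (ne_of_gt hU) (ne_of_gt hI)] at this
    linarith
  have hsumkey := Finset.sum_le_sum key
  have hrhs : ∑ x ∈ S, (((nf S A (res A x) : ℝ) * (nf S B (res B x) : ℝ)) /
          ((nf S (A ∪ B) (res (A ∪ B) x) : ℝ) * (nf S (A ∩ B) (res (A ∩ B) x) : ℝ)) - 1)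
      ≤ 0 := by
    rw [Finset.sum_sub_distrib, Finset.sum_const, nsmul_eq_mul, mul_one]
    have := counting (S := S) A B
    linarith
  have hmain : ∑ x ∈ S, Real.log (nf S A (res A x)) + ∑ x ∈ S, Real.log (nf S B (res B x))
      - ∑ x ∈ S, Real.log (nf S (A ∪ B) (res (A ∪ B) x))
      - ∑ x ∈ S, Real.log (nf S (A ∩ B) (res (A ∩ B) x)) ≤ 0 := by
    have expand : ∑ x ∈ S, (Real.log (nf S A (res A x)) + Real.log (nf S B (res B x))
        - Real.log (nf S (A ∪ B) (res (A ∪ B) x)) - Real.log (nf S (A ∩ B) (res (A ∩ B) x)))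
        = ∑ x ∈ S, Real.log (nf S A (res A x)) + ∑ x ∈ S, Real.log (nf S B (res B x))
      - ∑ x ∈ S, Real.log (nf S (A ∪ B) (res (A ∪ B) x))
      - ∑ x ∈ S, Real.log (nf S (A ∩ B) (res (A ∩ B) x)) := by
      rw [Finset.sum_sub_distrib, Finset.sum_sub_distrib, Finset.sum_add_distrib]
    linarith [le_trans hsumkey hrhs, expand.symm.le, expand.le]
  unfold ent
  have hdiv : (∑ x ∈ S, Real.log (nf S A (res A x)) + ∑ x ∈ S, Real.log (nf S B (res B x))) / S.card
      ≤ (∑ x ∈ S, Real.log (nf S (A ∪ B) (res (A ∪ B) x))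
          + ∑ x ∈ S, Real.log (nf S (A ∩ B) (res (A ∩ B) x))) / S.card := by
    apply div_le_div_of_nonneg_right ?_ hcard.le
    linarith
  rw [add_div, add_div] at hdiv
  linarith

end submod

section key

/-- neighborhoods of G1 -/
def Nb : Fin 7 → Finset (Fin 7) := ![{1,4,5},{0,2,5},{1,3},{2,4,6},{0,3},{0,1,6},{3,5}]

variable {q : ℕ} {S : Finset (Fin 7 → Fin q)}

lemma ent_det_step {C : Finset (Fin 7)} {v : Fin 7} (hN : Nb v ⊆ C)
    (hdet : ∀ v : Fin 7, ∀ z ∈ S, ∀ w ∈ S, (∀ u ∈ Nb v, z u = w u) → z v = w v) :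
    ent S (insert v C) = ent S C :=
  ent_insert_eq (fun z w hz hw h => hdet v z hz w hw (fun u hu => res_eq_iff.1 h u (hN hu)))

lemma keyU {q : ℕ} {S : Finset (Fin 7 → Fin q)} (hS : S.Nonempty)
    (hdet : ∀ v : Fin 7, ∀ z ∈ S, ∀ w ∈ S, (∀ u ∈ Nb v, z u = w u) → z v = w v) :
    3 * Real.log S.card ≤ 11 * Real.log q := by
  have e0 : ent S ∅ = 0 := ent_empty hS
  have eV : ent S Finset.univ = Real.log S.card := ent_univ hS
  have s1 : ent S ({0,1} : Finset (Fin 7)) + ent S (∅ : Finset (Fin 7)) ≤ ent S ({0} : Finset (Fin 7)) + ent S ({1} : Finset (Fin 7)) := by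
    have h := ent_submod hS ({0} : Finset (Fin 7)) ({1} : Finset (Fin 7))
    have hu : ({0} : Finset (Fin 7)) ∪ ({1} : Finset (Fin 7)) = ({0,1} : Finset (Fin 7)) := by decide
    have hi : ({0} : Finset (Fin 7)) ∩ ({1} : Finset (Fin 7)) = (∅ : Finset (Fin 7)) := by decide
    rw [hu, hi] at h
    exact h
  have s2 : ent S ({0,2,3,4} : Finset (Fin 7)) + ent S ({3,4} : Finset (Fin 7)) ≤ ent S ({0,3,4} : Finset (Fin 7)) + ent S ({2,3,4} : Finset (Fin 7)) := by
    have h := ent_submod hS ({0,3,4} : Finset (Fin 7)) ({2,3,4} : Finset (Fin 7))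
    have hu : ({0,3,4} : Finset (Fin 7)) ∪ ({2,3,4} : Finset (Fin 7)) = ({0,2,3,4} : Finset (Fin 7)) := by decide
    have hi : ({0,3,4} : Finset (Fin 7)) ∩ ({2,3,4} : Finset (Fin 7)) = ({3,4} : Finset (Fin 7)) := by decide
    rw [hu, hi] at h
    exact h
  have s3 : ent S ({0,1,2,5,6} : Finset (Fin 7)) + ent S ({1,5,6} : Finset (Fin 7)) ≤ ent S ({0,1,5,6} : Finset (Fin 7)) + ent S ({1,2,5,6} : Finset (Fin 7)) := by
    have h := ent_submod hS ({0,1,5,6} : Finset (Fin 7)) ({1,2,5,6} : Finset (Fin 7))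
    have hu : ({0,1,5,6} : Finset (Fin 7)) ∪ ({1,2,5,6} : Finset (Fin 7)) = ({0,1,2,5,6} : Finset (Fin 7)) := by decide
    have hi : ({0,1,5,6} : Finset (Fin 7)) ∩ ({1,2,5,6} : Finset (Fin 7)) = ({1,5,6} : Finset (Fin 7)) := by decide
    rw [hu, hi] at h
    exact h
  have s4 : ent S ({0,3,4} : Finset (Fin 7)) + ent S (∅ : Finset (Fin 7)) ≤ ent S ({0} : Finset (Fin 7)) + ent S ({3} : Finset (Fin 7)) := by
    have h := ent_submod hS ({0} : Finset (Fin 7)) ({3} : Finset (Fin 7))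
    have hu : ({0} : Finset (Fin 7)) ∪ ({3} : Finset (Fin 7)) = ({0,3} : Finset (Fin 7)) := by decide
    have hi : ({0} : Finset (Fin 7)) ∩ ({3} : Finset (Fin 7)) = (∅ : Finset (Fin 7)) := by decide
    rw [hu, hi] at h
    have hd : ent S (insert (4 : Fin 7) ({0,3} : Finset (Fin 7))) = ent S ({0,3} : Finset (Fin 7)) :=
      ent_det_step (by decide) hdet
    have hx : (({0,3,4} : Finset (Fin 7)) : Finset (Fin 7)) = insert (4 : Fin 7) ({0,3} : Finset (Fin 7)) := by decide
    rw [hx, hd]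
    exact h
  have s5 : ent S ({0,3,4,5,6} : Finset (Fin 7)) + ent S ({4,5} : Finset (Fin 7)) ≤ ent S ({0,4,5} : Finset (Fin 7)) + ent S ({3,4,5,6} : Finset (Fin 7)) := by
    have h := ent_submod hS ({0,4,5} : Finset (Fin 7)) ({3,4,5,6} : Finset (Fin 7))
    have hu : ({0,4,5} : Finset (Fin 7)) ∪ ({3,4,5,6} : Finset (Fin 7)) = ({0,3,4,5,6} : Finset (Fin 7)) := by decide
    have hi : ({0,4,5} : Finset (Fin 7)) ∩ ({3,4,5,6} : Finset (Fin 7)) = ({4,5} : Finset (Fin 7)) := by decide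
    rw [hu, hi] at h
    exact h
  have s6 : ent S (Finset.univ : Finset (Fin 7)) + ent S ({1,2,5,6} : Finset (Fin 7)) ≤ ent S ({0,1,2,5,6} : Finset (Fin 7)) + ent S ({1,2,3,5,6} : Finset (Fin 7)) := by
    have h := ent_submod hS ({0,1,2,5,6} : Finset (Fin 7)) ({1,2,3,5,6} : Finset (Fin 7))
    have hu : ({0,1,2,5,6} : Finset (Fin 7)) ∪ ({1,2,3,5,6} : Finset (Fin 7)) = ({0,1,2,3,5,6} : Finset (Fin 7)) := by decide
    have hi : ({0,1,2,5,6} : Finset (Fin 7)) ∩ ({1,2,3,5,6} : Finset (Fin 7)) = ({1,2,5,6} : Finset (Fin 7)) := by decide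
    rw [hu, hi] at h
    have hd : ent S (insert (4 : Fin 7) ({0,1,2,3,5,6} : Finset (Fin 7))) = ent S ({0,1,2,3,5,6} : Finset (Fin 7)) :=
      ent_det_step (by decide) hdet
    have hx : ((Finset.univ : Finset (Fin 7)) : Finset (Fin 7)) = insert (4 : Fin 7) ({0,1,2,3,5,6} : Finset (Fin 7)) := by decide
    rw [hx, hd]
    exact h
  have s7 : ent S ({0,1,2,5,6} : Finset (Fin 7)) + ent S ({2,6} : Finset (Fin 7)) ≤ ent S ({0,2,6} : Finset (Fin 7)) + ent S ({2,5,6} : Finset (Fin 7)) := by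
    have h := ent_submod hS ({0,2,6} : Finset (Fin 7)) ({2,5,6} : Finset (Fin 7))
    have hu : ({0,2,6} : Finset (Fin 7)) ∪ ({2,5,6} : Finset (Fin 7)) = ({0,2,5,6} : Finset (Fin 7)) := by decide
    have hi : ({0,2,6} : Finset (Fin 7)) ∩ ({2,5,6} : Finset (Fin 7)) = ({2,6} : Finset (Fin 7)) := by decide
    rw [hu, hi] at h
    have hd : ent S (insert (1 : Fin 7) ({0,2,5,6} : Finset (Fin 7))) = ent S ({0,2,5,6} : Finset (Fin 7)) :=
      ent_det_step (by decide) hdet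
    have hx : (({0,1,2,5,6} : Finset (Fin 7)) : Finset (Fin 7)) = insert (1 : Fin 7) ({0,2,5,6} : Finset (Fin 7)) := by decide
    rw [hx, hd]
    exact h
  have s8 : ent S ({0,1,5,6} : Finset (Fin 7)) + ent S ({1} : Finset (Fin 7)) ≤ ent S ({0,1} : Finset (Fin 7)) + ent S ({1,6} : Finset (Fin 7)) := by
    have h := ent_submod hS ({0,1} : Finset (Fin 7)) ({1,6} : Finset (Fin 7))
    have hu : ({0,1} : Finset (Fin 7)) ∪ ({1,6} : Finset (Fin 7)) = ({0,1,6} : Finset (Fin 7)) := by decide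
    have hi : ({0,1} : Finset (Fin 7)) ∩ ({1,6} : Finset (Fin 7)) = ({1} : Finset (Fin 7)) := by decide
    rw [hu, hi] at h
    have hd : ent S (insert (5 : Fin 7) ({0,1,6} : Finset (Fin 7))) = ent S ({0,1,6} : Finset (Fin 7)) :=
      ent_det_step (by decide) hdet
    have hx : (({0,1,5,6} : Finset (Fin 7)) : Finset (Fin 7)) = insert (5 : Fin 7) ({0,1,6} : Finset (Fin 7)) := by decide
    rw [hx, hd]
    exact h
  have s9 : ent S ({0,2,3,4,6} : Finset (Fin 7)) + ent S ({2,3,4} : Finset (Fin 7)) ≤ ent S ({0,2,3,4} : Finset (Fin 7)) + ent S ({2,3,4,6} : Finset (Fin 7)) := by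
    have h := ent_submod hS ({0,2,3,4} : Finset (Fin 7)) ({2,3,4,6} : Finset (Fin 7))
    have hu : ({0,2,3,4} : Finset (Fin 7)) ∪ ({2,3,4,6} : Finset (Fin 7)) = ({0,2,3,4,6} : Finset (Fin 7)) := by decide
    have hi : ({0,2,3,4} : Finset (Fin 7)) ∩ ({2,3,4,6} : Finset (Fin 7)) = ({2,3,4} : Finset (Fin 7)) := by decide
    rw [hu, hi] at h
    exact h
  have s10 : ent S (Finset.univ : Finset (Fin 7)) + ent S ({0,4,5} : Finset (Fin 7)) ≤ ent S ({0,1,4,5} : Finset (Fin 7)) + ent S ({0,3,4,5,6} : Finset (Fin 7)) := by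
    have h := ent_submod hS ({0,1,4,5} : Finset (Fin 7)) ({0,3,4,5,6} : Finset (Fin 7))
    have hu : ({0,1,4,5} : Finset (Fin 7)) ∪ ({0,3,4,5,6} : Finset (Fin 7)) = ({0,1,3,4,5,6} : Finset (Fin 7)) := by decide
    have hi : ({0,1,4,5} : Finset (Fin 7)) ∩ ({0,3,4,5,6} : Finset (Fin 7)) = ({0,4,5} : Finset (Fin 7)) := by decide
    rw [hu, hi] at h
    have hd : ent S (insert (2 : Fin 7) ({0,1,3,4,5,6} : Finset (Fin 7))) = ent S ({0,1,3,4,5,6} : Finset (Fin 7)) :=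
      ent_det_step (by decide) hdet
    have hx : ((Finset.univ : Finset (Fin 7)) : Finset (Fin 7)) = insert (2 : Fin 7) ({0,1,3,4,5,6} : Finset (Fin 7)) := by decide
    rw [hx, hd]
    exact h
  have s11 : ent S (Finset.univ : Finset (Fin 7)) + ent S ({0,2,6} : Finset (Fin 7)) ≤ ent S ({0,1,2,5,6} : Finset (Fin 7)) + ent S ({0,2,3,4,6} : Finset (Fin 7)) := by
    have h := ent_submod hS ({0,1,2,5,6} : Finset (Fin 7)) ({0,2,3,4,6} : Finset (Fin 7))
    have hu : ({0,1,2,5,6} : Finset (Fin 7)) ∪ ({0,2,3,4,6} : Finset (Fin 7)) = (Finset.univ : Finset (Fin 7)) := by decide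
    have hi : ({0,1,2,5,6} : Finset (Fin 7)) ∩ ({0,2,3,4,6} : Finset (Fin 7)) = ({0,2,6} : Finset (Fin 7)) := by decide
    rw [hu, hi] at h
    exact h
  have s12 : ent S ({1,2,3,5,6} : Finset (Fin 7)) + ent S ({5,6} : Finset (Fin 7)) ≤ ent S ({1,5,6} : Finset (Fin 7)) + ent S ({3,5,6} : Finset (Fin 7)) := by
    have h := ent_submod hS ({1,5,6} : Finset (Fin 7)) ({3,5,6} : Finset (Fin 7))
    have hu : ({1,5,6} : Finset (Fin 7)) ∪ ({3,5,6} : Finset (Fin 7)) = ({1,3,5,6} : Finset (Fin 7)) := by decide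
    have hi : ({1,5,6} : Finset (Fin 7)) ∩ ({3,5,6} : Finset (Fin 7)) = ({5,6} : Finset (Fin 7)) := by decide
    rw [hu, hi] at h
    have hd : ent S (insert (2 : Fin 7) ({1,3,5,6} : Finset (Fin 7))) = ent S ({1,3,5,6} : Finset (Fin 7)) :=
      ent_det_step (by decide) hdet
    have hx : (({1,2,3,5,6} : Finset (Fin 7)) : Finset (Fin 7)) = insert (2 : Fin 7) ({1,3,5,6} : Finset (Fin 7)) := by decide
    rw [hx, hd]
    exact h
  have s13 : ent S ({0,1,4,5} : Finset (Fin 7)) + ent S ({5} : Finset (Fin 7)) ≤ ent S ({1,5} : Finset (Fin 7)) + ent S ({4,5} : Finset (Fin 7)) := by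
    have h := ent_submod hS ({1,5} : Finset (Fin 7)) ({4,5} : Finset (Fin 7))
    have hu : ({1,5} : Finset (Fin 7)) ∪ ({4,5} : Finset (Fin 7)) = ({1,4,5} : Finset (Fin 7)) := by decide
    have hi : ({1,5} : Finset (Fin 7)) ∩ ({4,5} : Finset (Fin 7)) = ({5} : Finset (Fin 7)) := by decide
    rw [hu, hi] at h
    have hd : ent S (insert (0 : Fin 7) ({1,4,5} : Finset (Fin 7))) = ent S ({1,4,5} : Finset (Fin 7)) :=
      ent_det_step (by decide) hdet
    have hx : (({0,1,4,5} : Finset (Fin 7)) : Finset (Fin 7)) = insert (0 : Fin 7) ({1,4,5} : Finset (Fin 7)) := by decide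
    rw [hx, hd]
    exact h
  have s14 : ent S ({1,5} : Finset (Fin 7)) + ent S (∅ : Finset (Fin 7)) ≤ ent S ({1} : Finset (Fin 7)) + ent S ({5} : Finset (Fin 7)) := by
    have h := ent_submod hS ({1} : Finset (Fin 7)) ({5} : Finset (Fin 7))
    have hu : ({1} : Finset (Fin 7)) ∪ ({5} : Finset (Fin 7)) = ({1,5} : Finset (Fin 7)) := by decide
    have hi : ({1} : Finset (Fin 7)) ∩ ({5} : Finset (Fin 7)) = (∅ : Finset (Fin 7)) := by decide
    rw [hu, hi] at h
    exact h
  have s15 : ent S ({1,6} : Finset (Fin 7)) + ent S (∅ : Finset (Fin 7)) ≤ ent S ({1} : Finset (Fin 7)) + ent S ({6} : Finset (Fin 7)) := by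
    have h := ent_submod hS ({1} : Finset (Fin 7)) ({6} : Finset (Fin 7))
    have hu : ({1} : Finset (Fin 7)) ∪ ({6} : Finset (Fin 7)) = ({1,6} : Finset (Fin 7)) := by decide
    have hi : ({1} : Finset (Fin 7)) ∩ ({6} : Finset (Fin 7)) = (∅ : Finset (Fin 7)) := by decide
    rw [hu, hi] at h
    exact h
  have s16 : ent S ({2,3,4,6} : Finset (Fin 7)) + ent S ({6} : Finset (Fin 7)) ≤ ent S ({2,6} : Finset (Fin 7)) + ent S ({4,6} : Finset (Fin 7)) := by
    have h := ent_submod hS ({2,6} : Finset (Fin 7)) ({4,6} : Finset (Fin 7))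
    have hu : ({2,6} : Finset (Fin 7)) ∪ ({4,6} : Finset (Fin 7)) = ({2,4,6} : Finset (Fin 7)) := by decide
    have hi : ({2,6} : Finset (Fin 7)) ∩ ({4,6} : Finset (Fin 7)) = ({6} : Finset (Fin 7)) := by decide
    rw [hu, hi] at h
    have hd : ent S (insert (3 : Fin 7) ({2,4,6} : Finset (Fin 7))) = ent S ({2,4,6} : Finset (Fin 7)) :=
      ent_det_step (by decide) hdet
    have hx : (({2,3,4,6} : Finset (Fin 7)) : Finset (Fin 7)) = insert (3 : Fin 7) ({2,4,6} : Finset (Fin 7)) := by decide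
    rw [hx, hd]
    exact h
  have s17 : ent S ({2,5} : Finset (Fin 7)) + ent S (∅ : Finset (Fin 7)) ≤ ent S ({2} : Finset (Fin 7)) + ent S ({5} : Finset (Fin 7)) := by
    have h := ent_submod hS ({2} : Finset (Fin 7)) ({5} : Finset (Fin 7))
    have hu : ({2} : Finset (Fin 7)) ∪ ({5} : Finset (Fin 7)) = ({2,5} : Finset (Fin 7)) := by decide
    have hi : ({2} : Finset (Fin 7)) ∩ ({5} : Finset (Fin 7)) = (∅ : Finset (Fin 7)) := by decide
    rw [hu, hi] at h
    exact h
  have s18 : ent S ({2,5,6} : Finset (Fin 7)) + ent S ({5} : Finset (Fin 7)) ≤ ent S ({2,5} : Finset (Fin 7)) + ent S ({5,6} : Finset (Fin 7)) := by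
    have h := ent_submod hS ({2,5} : Finset (Fin 7)) ({5,6} : Finset (Fin 7))
    have hu : ({2,5} : Finset (Fin 7)) ∪ ({5,6} : Finset (Fin 7)) = ({2,5,6} : Finset (Fin 7)) := by decide
    have hi : ({2,5} : Finset (Fin 7)) ∩ ({5,6} : Finset (Fin 7)) = ({5} : Finset (Fin 7)) := by decide
    rw [hu, hi] at h
    exact h
  have s19 : ent S ({3,5,6} : Finset (Fin 7)) + ent S (∅ : Finset (Fin 7)) ≤ ent S ({3} : Finset (Fin 7)) + ent S ({5} : Finset (Fin 7)) := by
    have h := ent_submod hS ({3} : Finset (Fin 7)) ({5} : Finset (Fin 7))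
    have hu : ({3} : Finset (Fin 7)) ∪ ({5} : Finset (Fin 7)) = ({3,5} : Finset (Fin 7)) := by decide
    have hi : ({3} : Finset (Fin 7)) ∩ ({5} : Finset (Fin 7)) = (∅ : Finset (Fin 7)) := by decide
    rw [hu, hi] at h
    have hd : ent S (insert (6 : Fin 7) ({3,5} : Finset (Fin 7))) = ent S ({3,5} : Finset (Fin 7)) :=
      ent_det_step (by decide) hdet
    have hx : (({3,5,6} : Finset (Fin 7)) : Finset (Fin 7)) = insert (6 : Fin 7) ({3,5} : Finset (Fin 7)) := by decide
    rw [hx, hd]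
    exact h
  have s20 : ent S ({3,4,5,6} : Finset (Fin 7)) + ent S ({4} : Finset (Fin 7)) ≤ ent S ({3,4} : Finset (Fin 7)) + ent S ({4,5} : Finset (Fin 7)) := by
    have h := ent_submod hS ({3,4} : Finset (Fin 7)) ({4,5} : Finset (Fin 7))
    have hu : ({3,4} : Finset (Fin 7)) ∪ ({4,5} : Finset (Fin 7)) = ({3,4,5} : Finset (Fin 7)) := by decide
    have hi : ({3,4} : Finset (Fin 7)) ∩ ({4,5} : Finset (Fin 7)) = ({4} : Finset (Fin 7)) := by decide
    rw [hu, hi] at h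
    have hd : ent S (insert (6 : Fin 7) ({3,4,5} : Finset (Fin 7))) = ent S ({3,4,5} : Finset (Fin 7)) :=
      ent_det_step (by decide) hdet
    have hx : (({3,4,5,6} : Finset (Fin 7)) : Finset (Fin 7)) = insert (6 : Fin 7) ({3,4,5} : Finset (Fin 7)) := by decide
    rw [hx, hd]
    exact h
  have s21 : ent S ({4,5} : Finset (Fin 7)) + ent S (∅ : Finset (Fin 7)) ≤ ent S ({4} : Finset (Fin 7)) + ent S ({5} : Finset (Fin 7)) := by
    have h := ent_submod hS ({4} : Finset (Fin 7)) ({5} : Finset (Fin 7))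
    have hu : ({4} : Finset (Fin 7)) ∪ ({5} : Finset (Fin 7)) = ({4,5} : Finset (Fin 7)) := by decide
    have hi : ({4} : Finset (Fin 7)) ∩ ({5} : Finset (Fin 7)) = (∅ : Finset (Fin 7)) := by decide
    rw [hu, hi] at h
    exact h
  have s22 : ent S ({4,6} : Finset (Fin 7)) + ent S (∅ : Finset (Fin 7)) ≤ ent S ({4} : Finset (Fin 7)) + ent S ({6} : Finset (Fin 7)) := by
    have h := ent_submod hS ({4} : Finset (Fin 7)) ({6} : Finset (Fin 7))
    have hu : ({4} : Finset (Fin 7)) ∪ ({6} : Finset (Fin 7)) = ({4,6} : Finset (Fin 7)) := by decide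
    have hi : ({4} : Finset (Fin 7)) ∩ ({6} : Finset (Fin 7)) = (∅ : Finset (Fin 7)) := by decide
    rw [hu, hi] at h
    exact h
  have c0 : ent S ({0} : Finset (Fin 7)) ≤ Real.log q := by
    have h := ent_le_card_mul_log hS ({0} : Finset (Fin 7))
    simpa using h
  have c1 : ent S ({1} : Finset (Fin 7)) ≤ Real.log q := by
    have h := ent_le_card_mul_log hS ({1} : Finset (Fin 7))
    simpa using h
  have c2 : ent S ({2} : Finset (Fin 7)) ≤ Real.log q := by
    have h := ent_le_card_mul_log hS ({2} : Finset (Fin 7))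
    simpa using h
  have c3 : ent S ({3} : Finset (Fin 7)) ≤ Real.log q := by
    have h := ent_le_card_mul_log hS ({3} : Finset (Fin 7))
    simpa using h
  have c4 : ent S ({4} : Finset (Fin 7)) ≤ Real.log q := by
    have h := ent_le_card_mul_log hS ({4} : Finset (Fin 7))
    simpa using h
  have c5 : ent S ({5} : Finset (Fin 7)) ≤ Real.log q := by
    have h := ent_le_card_mul_log hS ({5} : Finset (Fin 7))
    simpa using h
  have c6 : ent S ({6} : Finset (Fin 7)) ≤ Real.log q := by
    have h := ent_le_card_mul_log hS ({6} : Finset (Fin 7))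
    simpa using h
  linarith

end key




section construction

def pk (a b c : ZMod 2) : Fin 8 := ⟨a.val + 2*b.val + 4*c.val, by have ha := a.val_lt; have hb := b.val_lt; have hc := c.val_lt; omega⟩
def b0 (x : Fin 8) : ZMod 2 := ((x.val % 2 : ℕ) : ZMod 2)
def b1 (x : Fin 8) : ZMod 2 := ((x.val / 2 % 2 : ℕ) : ZMod 2)
def b2 (x : Fin 8) : ZMod 2 := ((x.val / 4 : ℕ) : ZMod 2)

lemma b0_pk (a b c : ZMod 2) : b0 (pk a b c) = a := by revert a b c; decide
lemma b1_pk (a b c : ZMod 2) : b1 (pk a b c) = b := by revert a b c; decide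
lemma b2_pk (a b c : ZMod 2) : b2 (pk a b c) = c := by revert a b c; decide

lemma pk_congr {a a' b b' c c' : ZMod 2} (ha : a = a') (hb : b = b') (hc : c = c') :
    pk a b c = pk a' b' c' := by rw [ha, hb, hc]

def phi (y : Fin 11 → ZMod 2) : Fin 7 → Fin 8 := fun v =>
  if v = 0 then pk (y 0) (y 1) (y 2)
  else if v = 1 then pk (y 3) (y 4) (y 5)
  else if v = 2 then pk (y 4) (y 6) (y 4 + y 5 + y 6)
  else if v = 3 then pk (y 7) (y 4 + y 6) (y 8)
  else if v = 4 then pk (y 0 + y 2) (y 0 + y 1 + y 2 + y 7 + y 8) (y 1)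
  else if v = 5 then pk (y 9) (y 1 + y 2 + y 3) (y 10)
  else pk (y 4 + y 6 + y 7) (y 9 + y 10) (y 1 + y 2 + y 3 + y 4 + y 6 + y 7 + y 10)

def f8 (x : Fin 7 → Fin 8) : Fin 7 → Fin 8 := fun v =>
  if v = 0 then pk (b0 (x 1) + b0 (x 4) + b2 (x 4) + b1 (x 5)) (b2 (x 4)) (b0 (x 1) + b2 (x 4) + b1 (x 5))
  else if v = 1 then pk (b1 (x 0) + b2 (x 0) + b1 (x 5)) (b0 (x 2)) (b0 (x 2) + b1 (x 2) + b2 (x 2))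
  else if v = 2 then pk (b1 (x 1)) (b1 (x 1) + b1 (x 3)) (b2 (x 1) + b1 (x 3))
  else if v = 3 then pk (b0 (x 2) + b1 (x 2) + b0 (x 6)) (b0 (x 2) + b1 (x 2)) (b0 (x 2) + b1 (x 2) + b0 (x 4) + b1 (x 4) + b2 (x 4) + b0 (x 6))
  else if v = 4 then pk (b0 (x 0) + b2 (x 0)) (b0 (x 0) + b1 (x 0) + b2 (x 0) + b0 (x 3) + b2 (x 3)) (b1 (x 0))
  else if v = 5 then pk (b1 (x 0) + b2 (x 0) + b0 (x 1) + b0 (x 6) + b1 (x 6) + b2 (x 6)) (b1 (x 0) + b2 (x 0) + b0 (x 1)) (b1 (x 0) + b2 (x 0) + b0 (x 1) + b0 (x 6) + b2 (x 6))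
  else pk (b0 (x 3) + b1 (x 3)) (b0 (x 5) + b2 (x 5)) (b0 (x 3) + b1 (x 3) + b1 (x 5) + b2 (x 5))

lemma f8_phi (y : Fin 11 → ZMod 2) : f8 (phi y) = phi y := by
  have h2 : (2 : ZMod 2) = 0 := rfl
  funext v
  fin_cases v
  · simp only [f8, phi, Fin.reduceEq, reduceIte, b0_pk, b1_pk, b2_pk, Fin.isValue]
    apply pk_congr
    · linear_combination (y 1 + y 2 + y 3) * h2
    · ring1
    · linear_combination (y 1 + y 3) * h2
  · simp only [f8, phi, Fin.reduceEq, reduceIte, b0_pk, b1_pk, b2_pk, Fin.isValue]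
    apply pk_congr
    · linear_combination (y 1 + y 2) * h2
    · ring1
    · linear_combination (y 4 + y 6) * h2
  · simp only [f8, phi, Fin.reduceEq, reduceIte, b0_pk, b1_pk, b2_pk, Fin.isValue]
    apply pk_congr
    · ring1
    · linear_combination (y 4) * h2
    · ring1
  · simp only [f8, phi, Fin.reduceEq, reduceIte, b0_pk, b1_pk, b2_pk, Fin.isValue]
    apply pk_congr
    · linear_combination (y 4 + y 6) * h2
    · ring1
    · linear_combination (y 0 + y 1 + y 2 + y 4 + y 6 + y 7) * h2
  · simp only [f8, phi, Fin.reduceEq, reduceIte, b0_pk, b1_pk, b2_pk, Fin.isValue]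
    apply pk_congr
    · ring1
    · ring1
    · ring1
  · simp only [f8, phi, Fin.reduceEq, reduceIte, b0_pk, b1_pk, b2_pk, Fin.isValue]
    apply pk_congr
    · linear_combination (y 1 + y 2 + y 3 + y 4 + y 6 + y 7 + y 10) * h2
    · ring1
    · linear_combination (y 1 + y 2 + y 3 + y 4 + y 6 + y 7) * h2
  · simp only [f8, phi, Fin.reduceEq, reduceIte, b0_pk, b1_pk, b2_pk, Fin.isValue]
    apply pk_congr
    · ring1
    · ring1
    · ring1

lemma phi_inj : Function.Injective phi := by
  intro y y' h
  funext i
  fin_cases i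
  · have := congrArg (b0) (congrFun h 0)
    simp only [phi, Fin.reduceEq, reduceIte, b0_pk, b1_pk, b2_pk, Fin.isValue] at this; exact this
  · have := congrArg (b1) (congrFun h 0)
    simp only [phi, Fin.reduceEq, reduceIte, b0_pk, b1_pk, b2_pk, Fin.isValue] at this; exact this
  · have := congrArg (b2) (congrFun h 0)
    simp only [phi, Fin.reduceEq, reduceIte, b0_pk, b1_pk, b2_pk, Fin.isValue] at this; exact this
  · have := congrArg (b0) (congrFun h 1)
    simp only [phi, Fin.reduceEq, reduceIte, b0_pk, b1_pk, b2_pk, Fin.isValue] at this; exact this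
  · have := congrArg (b1) (congrFun h 1)
    simp only [phi, Fin.reduceEq, reduceIte, b0_pk, b1_pk, b2_pk, Fin.isValue] at this; exact this
  · have := congrArg (b2) (congrFun h 1)
    simp only [phi, Fin.reduceEq, reduceIte, b0_pk, b1_pk, b2_pk, Fin.isValue] at this; exact this
  · have := congrArg (b1) (congrFun h 2)
    simp only [phi, Fin.reduceEq, reduceIte, b0_pk, b1_pk, b2_pk, Fin.isValue] at this; exact this
  · have := congrArg (b0) (congrFun h 3)
    simp only [phi, Fin.reduceEq, reduceIte, b0_pk, b1_pk, b2_pk, Fin.isValue] at this; exact this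
  · have := congrArg (b2) (congrFun h 3)
    simp only [phi, Fin.reduceEq, reduceIte, b0_pk, b1_pk, b2_pk, Fin.isValue] at this; exact this
  · have := congrArg (b0) (congrFun h 5)
    simp only [phi, Fin.reduceEq, reduceIte, b0_pk, b1_pk, b2_pk, Fin.isValue] at this; exact this
  · have := congrArg (b2) (congrFun h 5)
    simp only [phi, Fin.reduceEq, reduceIte, b0_pk, b1_pk, b2_pk, Fin.isValue] at this; exact this

end construction



lemma not_depends_agree {q : ℕ} (g : (Fin 7 → Fin q) → Fin q) (A : Finset (Fin 7))
    (hg : ∀ u, u ∉ A → ¬ DependsOnCoord g u) :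
    ∀ z w : Fin 7 → Fin q, (∀ u ∈ A, z u = w u) → g z = g w := by
  suffices H : ∀ D : Finset (Fin 7), ∀ z w : Fin 7 → Fin q,
      (∀ u ∈ A, z u = w u) → (∀ u, z u ≠ w u → u ∈ D) → g z = g w from
    fun z w h => H Finset.univ z w h (fun u _ => Finset.mem_univ u)
  intro D
  induction D using Finset.strongInductionOn with
  | _ D ih =>
    intro z w h hD
    by_cases hzw : z = w
    · rw [hzw]
    · have : ∃ u, z u ≠ w u := by
        by_contra hc
        push_neg at hc
        exact hzw (funext hc)
      obtain ⟨u₀, hu₀⟩ := this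
      have hu₀A : u₀ ∉ A := fun hA => hu₀ (h u₀ hA)
      have hu₀D : u₀ ∈ D := hD u₀ hu₀
      have h1 : g z = g (Function.update z u₀ (w u₀)) := by
        by_contra hne
        exact hg u₀ hu₀A ⟨z, Function.update z u₀ (w u₀),
          fun x hx => (Function.update_of_ne hx _ _).symm, hne⟩
      rw [h1]
      refine ih (D.erase u₀) (Finset.erase_ssubset hu₀D) _ _ ?_ ?_
      · intro u hA
        rw [Function.update_of_ne (fun e : u = u₀ => hu₀A (e ▸ hA))]
        exact h u hA
      · intro u hne
        rcases eq_or_ne u u₀ with rfl | hu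
        · simp at hne
        · rw [Function.update_of_ne hu] at hne
          exact Finset.mem_erase.2 ⟨hu, hD u hne⟩

instance G1decAdj : DecidableRel G1.Adj := fun a b =>
  decidable_of_iff _ (SimpleGraph.fromRel_adj _ a b).symm

lemma adj_mem_Nb : ∀ u v : Fin 7, G1.Adj u v → u ∈ Nb v := by decide

lemma mem_Nb_adj : ∀ u v : Fin 7, u ∈ Nb v → G1.Adj u v := by decide

lemma f8_congr0 {a b : Fin 7 → Fin 8} (h : ∀ w ∈ Nb (0:Fin 7), a w = b w) :
    f8 a 0 = f8 b 0 := by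
  simp only [f8, Fin.reduceEq, reduceIte, Fin.isValue]
  rw [h 1 (by decide), h 4 (by decide), h 5 (by decide)]

lemma f8_congr1 {a b : Fin 7 → Fin 8} (h : ∀ w ∈ Nb (1:Fin 7), a w = b w) :
    f8 a 1 = f8 b 1 := by
  simp only [f8, Fin.reduceEq, reduceIte, Fin.isValue]
  rw [h 0 (by decide), h 2 (by decide), h 5 (by decide)]

lemma f8_congr2 {a b : Fin 7 → Fin 8} (h : ∀ w ∈ Nb (2:Fin 7), a w = b w) :
    f8 a 2 = f8 b 2 := by
  simp only [f8, Fin.reduceEq, reduceIte, Fin.isValue]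
  rw [h 1 (by decide), h 3 (by decide)]

lemma f8_congr3 {a b : Fin 7 → Fin 8} (h : ∀ w ∈ Nb (3:Fin 7), a w = b w) :
    f8 a 3 = f8 b 3 := by
  simp only [f8, Fin.reduceEq, reduceIte, Fin.isValue]
  rw [h 2 (by decide), h 4 (by decide), h 6 (by decide)]

lemma f8_congr4 {a b : Fin 7 → Fin 8} (h : ∀ w ∈ Nb (4:Fin 7), a w = b w) :
    f8 a 4 = f8 b 4 := by
  simp only [f8, Fin.reduceEq, reduceIte, Fin.isValue]
  rw [h 0 (by decide), h 3 (by decide)]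

lemma f8_congr5 {a b : Fin 7 → Fin 8} (h : ∀ w ∈ Nb (5:Fin 7), a w = b w) :
    f8 a 5 = f8 b 5 := by
  simp only [f8, Fin.reduceEq, reduceIte, Fin.isValue]
  rw [h 0 (by decide), h 1 (by decide), h 6 (by decide)]

lemma f8_congr6 {a b : Fin 7 → Fin 8} (h : ∀ w ∈ Nb (6:Fin 7), a w = b w) :
    f8 a 6 = f8 b 6 := by
  simp only [f8, Fin.reduceEq, reduceIte, Fin.isValue]
  rw [h 3 (by decide), h 5 (by decide)]

lemma f8_congr {a b : Fin 7 → Fin 8} (v : Fin 7) (h : ∀ w ∈ Nb v, a w = b w) :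
    f8 a v = f8 b v := by
  fin_cases v
  · exact f8_congr0 (fun w hw => h w hw)
  · exact f8_congr1 (fun w hw => h w hw)
  · exact f8_congr2 (fun w hw => h w hw)
  · exact f8_congr3 (fun w hw => h w hw)
  · exact f8_congr4 (fun w hw => h w hw)
  · exact f8_congr5 (fun w hw => h w hw)
  · exact f8_congr6 (fun w hw => h w hw)

lemma IG_f8 : IGLe G1 f8 := by
  intro u v hdep
  by_contra hn
  obtain ⟨a, b, hab, hne⟩ := hdep
  exact hne (f8_congr v (fun w hw => hab w (fun e => hn (e ▸ mem_Nb_adj w v hw))))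

lemma fix_det {q : ℕ} {f : (Fin 7 → Fin q) → (Fin 7 → Fin q)} (hf : IGLe G1 f)
    {z w : Fin 7 → Fin q} (hz : f z = z) (hw : f w = w) (v : Fin 7)
    (h : ∀ u ∈ Nb v, z u = w u) : z v = w v := by
  have hg : ∀ u, u ∉ Nb v → ¬ DependsOnCoord (fun x => f x v) u :=
    fun u hu hd => hu (adj_mem_Nb u v (hf u v hd))
  calc z v = f z v := (congrFun hz v).symm
    _ = f w v := not_depends_agree _ _ hg z w h
    _ = w v := congrFun hw v

/-- set of fixed points as a Finset -/
def FixT {q : ℕ} (f : (Fin 7 → Fin q) → (Fin 7 → Fin q)) : Finset (Fin 7 → Fin q) :=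
  Finset.univ.filter (fun p => f p = p)

lemma coe_FixT {q : ℕ} (f : (Fin 7 → Fin q) → (Fin 7 → Fin q)) :
    {p : Fin 7 → Fin q | f p = p} = ↑(FixT f) := by
  ext p
  simp [FixT]

lemma logb_fix_le {q : ℕ} (hq : 2 ≤ q) (f : (Fin 7 → Fin q) → (Fin 7 → Fin q))
    (hf : IGLe G1 f) :
    Real.logb q (Set.ncard {p : Fin 7 → Fin q | f p = p}) ≤ 11/3 := by
  rw [coe_FixT, Set.ncard_coe_finset]
  rcases (FixT f).eq_empty_or_nonempty with he | hne
  · rw [he]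
    simp [Real.logb]
    norm_num
  · have hdet : ∀ v : Fin 7, ∀ z ∈ FixT f, ∀ w ∈ FixT f, (∀ u ∈ Nb v, z u = w u) → z v = w v := by
      intro v z hz w hw h
      exact fix_det hf (Finset.mem_filter.1 hz).2 (Finset.mem_filter.1 hw).2 v h
    have h3 := keyU hne hdet
    have hq1 : (1:ℝ) < (q:ℝ) := by exact_mod_cast hq
    have hlogq : 0 < Real.log q := Real.log_pos hq1
    rw [Real.logb, div_le_iff₀ hlogq]
    linarith

lemma fixT8_card : (FixT f8).card = 2048 := by
  have hsub : Finset.univ.image phi ⊆ FixT f8 := by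
    intro p hp
    obtain ⟨y, _, rfl⟩ := Finset.mem_image.1 hp
    exact Finset.mem_filter.2 ⟨Finset.mem_univ _, f8_phi y⟩
  have himg : (Finset.univ.image phi).card = 2048 := by
    rw [Finset.card_image_of_injective _ phi_inj, Finset.card_univ]
    simp
  have hlow : 2048 ≤ (FixT f8).card := himg ▸ Finset.card_le_card hsub
  have hne : (FixT f8).Nonempty := by
    apply Finset.card_pos.1
    omega
  have hdet : ∀ v : Fin 7, ∀ z ∈ FixT f8, ∀ w ∈ FixT f8, (∀ u ∈ Nb v, z u = w u) → z v = w v := by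
    intro v z hz w hw h
    exact fix_det IG_f8 (Finset.mem_filter.1 hz).2 (Finset.mem_filter.1 hw).2 v h
  have h3 := keyU hne hdet
  have hlog8 : Real.log ((8:ℕ):ℝ) = 3 * Real.log 2 := by
    rw [show ((8:ℕ):ℝ) = 2^3 by norm_num, Real.log_pow]
    push_cast
    ring
  have hcardpos : (0:ℝ) < ((FixT f8).card : ℝ) := by
    have := hne.card_pos
    exact_mod_cast this
  have hloghi : Real.log ((FixT f8).card) ≤ Real.log 2048 := by
    have h2048 : Real.log (2048:ℝ) = 11 * Real.log 2 := by
      rw [show (2048:ℝ) = 2^11 by norm_num, Real.log_pow]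
      push_cast
      ring
    rw [h2048]
    rw [hlog8] at h3
    linarith
  have hhi : ((FixT f8).card : ℝ) ≤ 2048 := by
    have := (Real.log_le_log_iff hcardpos (by norm_num : (0:ℝ) < 2048)).1 hloghi
    exact this
  have : (FixT f8).card ≤ 2048 := by exact_mod_cast hhi
  omega

lemma logb_8_2048 : Real.logb ((8:ℕ):ℝ) ((2048:ℕ):ℝ) = 11/3 := by
  have h2 : (0:ℝ) < Real.log 2 := Real.log_pos (by norm_num)
  rw [show ((2048:ℕ):ℝ) = 2^11 by norm_num, show ((8:ℕ):ℝ) = 2^3 by norm_num,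
    Real.logb, Real.log_pow, Real.log_pow]
  field_simp
  ring

lemma guessing_le (q : ℕ) (hq : 2 ≤ q) : guessing G1 q ≤ 11/3 := by
  unfold guessing
  apply csSup_le
  · refine ⟨_, ⟨(fun _ _ => (⟨0, by omega⟩ : Fin q)), ?_, rfl⟩⟩
    rintro u v ⟨a, b, hab, hne⟩
    exact absurd rfl hne
  · rintro x ⟨f, hf, rfl⟩
    exact logb_fix_le hq f hf

lemma guessing8 : guessing G1 8 = 11/3 := by
  apply le_antisymm (guessing_le 8 (by norm_num))
  unfold guessing
  apply le_csSup
  · exact ⟨11/3, by rintro x ⟨f, hf, rfl⟩; exact logb_fix_le (by norm_num) f hf⟩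
  · refine ⟨f8, IG_f8, ?_⟩
    rw [coe_FixT, Set.ncard_coe_finset, fixT8_card]
    exact logb_8_2048.symm

end EG1

/-- The entropy of `G₁` equals `11/3`. -/
theorem entropy_G1 : graphEntropy G1 = 11/3 := by
  have hg8 : guessing G1 8 = 11/3 := EG1.guessing8
  unfold graphEntropy
  apply le_antisymm
  · apply csSup_le
    · exact ⟨11/3, ⟨8, by norm_num, hg8.symm⟩⟩
    · rintro x ⟨q, hq, rfl⟩
      exact EG1.guessing_le q hq
  · apply le_csSup
    · refine ⟨11/3, ?_⟩
      rintro x ⟨q, hq, rfl⟩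
      exact EG1.guessing_le q hq
    · exact ⟨8, by norm_num, hg8.symm⟩

end
end
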